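/- arXiv:1306.4357 — 6 statements merged into one kernel-verified Lean document; each statement's English description precedes it below -/
import Mathlib

section
/- Let (X, μ, T) be an infinite measure preserving, ergodic, recurrent Z²-action on a σ-finite Lebesgue space. If θ ∈ [0, π) is a recurrent direction for T, then θ has the uniform sweeping out property for every measurable set A with 0 < μ(A) < ∞. That is, for every ε > 0 and every 0 < α < 1/2 there exist pairwise disjoint positive-measure subsets A₁,…,A_k of A and vectors v₁,…,v_k ∈ Z² in the ε-tunnel of θ such that T^{v₁}A₁,…,T^{v_k}A_k are pairwise disjoint subsets of A, μ(∪ᵢ Aᵢ) > α·μ(A), and μ(∪ᵢ T^{vᵢ}Aᵢ) > α·μ(A). -/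
open MeasureTheory

noncomputable section

/-- Embedding of `ℤ²` into `ℝ²`. -/
def toR (n : ℤ × ℤ) : ℝ × ℝ := ((n.1 : ℝ), (n.2 : ℝ))

/-- The Euclidean norm on `ℝ²`. -/
def e2 (p : ℝ × ℝ) : ℝ := Real.sqrt (p.1 ^ 2 + p.2 ^ 2)

/-- `p` lies in the `ε`-tunnel of the direction `θ`, i.e. within Euclidean distance `ε`
of the line through the origin in direction `θ`. -/
def InTunnel (θ ε : ℝ) (p : ℝ × ℝ) : Prop :=
  ∃ t : ℝ, e2 (p - (t * Real.cos θ, t * Real.sin θ)) < ε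

/-- The direction in `[0,π)` associated to a vector `u`: the angle `u` makes with
`sign(u₂)·(1,0)`, and `0` if `u₂ = 0`. -/
def dirOf (u : ℝ × ℝ) : Real :=
  if u.2 = 0 then 0 else Real.arccos (Real.sign u.2 * u.1 / e2 u)

variable {X : Type*} [MeasurableSpace X]

/-- `θ` is a recurrent direction for the `ℤ²`-action `T`. -/
def RecurrentDirection (μ : Measure X) (T : ℤ × ℤ → X → X) (θ : ℝ) : Prop :=
  ∀ ε : ℝ, 0 < ε → ∀ A : Set X, MeasurableSet A → 0 < μ A →
    ∃ n : ℤ × ℤ, n ≠ 0 ∧ InTunnel θ ε (toR n) ∧ 0 < μ (A ∩ T n ⁻¹' A)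

/-- Ergodicity of a `ℤ²`-action. -/
def IsErgodicAction (μ : Measure X) (T : ℤ × ℤ → X → X) : Prop :=
  ∀ A : Set X, MeasurableSet A → (∀ n, T n ⁻¹' A = A) → μ A = 0 ∨ μ Aᶜ = 0

/-- Recurrence of a `ℤ²`-action. -/
def IsRecurrentAction (μ : Measure X) (T : ℤ × ℤ → X → X) : Prop :=
  ∀ A : Set X, MeasurableSet A → 0 < μ A →
    ∃ u : ℤ × ℤ, u ≠ 0 ∧ 0 < μ (A ∩ T u ⁻¹' A)

/-- The `ε` sweeping out property of the direction `θ` for the set `A`. -/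
def SweepsOut (μ : Measure X) (T : ℤ × ℤ → X → X) (θ ε : ℝ) (A : Set X) : Prop :=
  ∀ α : ℝ, 0 < α → α < 1/2 →
    ∃ (k : ℕ) (As : Fin k → Set X) (v : Fin k → ℤ × ℤ),
      (∀ i, MeasurableSet (As i)) ∧ (∀ i, As i ⊆ A) ∧ (∀ i, 0 < μ (As i)) ∧
      (Pairwise fun i j => Disjoint (As i) (As j)) ∧
      (∀ i, InTunnel θ ε (toR (v i))) ∧
      (∀ i, T (v i) '' As i ⊆ A) ∧
      (Pairwise fun i j => Disjoint (T (v i) '' As i) (T (v j) '' As j)) ∧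
      ENNReal.ofReal α * μ A < μ (⋃ i, As i) ∧
      ENNReal.ofReal α * μ A < μ (⋃ i, T (v i) '' As i)

/-- A recurrent direction is uniform sweeping out for every set of finite positive measure. -/
theorem recurrentDirection_sweepsOut
    {X : Type*} [MeasurableSpace X] (μ : Measure X) [SigmaFinite μ]
    (T : ℤ × ℤ → X → X)
    (hmp : ∀ n, MeasurePreserving (T n) μ μ)
    (hadd : ∀ m n x, T (m + n) x = T m (T n x)) (hzero : ∀ x, T 0 x = x)
    (hinf : μ Set.univ = ⊤) (herg : IsErgodicAction μ T)
    (hrec : IsRecurrentAction μ T)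
    (θ : ℝ) (hθ0 : 0 ≤ θ) (hθπ : θ < Real.pi)
    (hθ : RecurrentDirection μ T θ) :
    ∀ A : Set X, MeasurableSet A → 0 < μ A → μ A < ⊤ →
      ∀ ε : ℝ, 0 < ε → SweepsOut μ T θ ε A := by
  classical
  intro A hA hApos hAfin ε hε α hα0 hα2
  -- basic dynamical facts
  have hTT : ∀ (n : ℤ × ℤ) (x : X), T n (T (-n) x) = x := by
    intro n x
    rw [← hadd]; simp [hzero]
  have hTT' : ∀ (n : ℤ × ℤ) (x : X), T (-n) (T n x) = x := by
    intro n x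
    rw [← hadd]; simp [hzero]
  have himg : ∀ (n : ℤ × ℤ) (B : Set X), T n '' B = T (-n) ⁻¹' B := by
    intro n B
    ext y
    constructor
    · rintro ⟨x, hx, rfl⟩; simpa [hTT'] using hx
    · intro hy; exact ⟨T (-n) y, hy, hTT n y⟩
  have himg_meas : ∀ (n : ℤ × ℤ) (B : Set X), MeasurableSet B → MeasurableSet (T n '' B) := by
    intro n B hB
    rw [himg]
    exact (hmp (-n)).measurable hB
  have himg_measure : ∀ (n : ℤ × ℤ) (B : Set X), MeasurableSet B → μ (T n '' B) = μ B := by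
    intro n B hB
    rw [himg]
    exact (hmp (-n)).measure_preimage hB.nullMeasurableSet
  -- the supremum of intersection measures over tunnel vectors
  set Good : ℤ × ℤ → Prop := fun n => n ≠ 0 ∧ InTunnel θ ε (toR n) with hGoodDef
  set s : Set X → ENNReal := fun B => ⨆ p : {n : ℤ × ℤ // Good n}, μ (B ∩ T p.1 ⁻¹' B) with hsDef
  have hexists : ∀ B : Set X, MeasurableSet B → 0 < μ B → μ B < ⊤ →
      ∃ n : ℤ × ℤ, Good n ∧ s B / 2 < μ (B ∩ T n ⁻¹' B) ∧ 0 < μ (B ∩ T n ⁻¹' B) := by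
    intro B hB hBpos hBfin
    have h1 : 0 < s B := by
      obtain ⟨n, hn0, hntun, hnpos⟩ := hθ ε hε B hB hBpos
      exact hnpos.trans_le
        (le_iSup (fun p : {n : ℤ × ℤ // Good n} => μ (B ∩ T p.1 ⁻¹' B)) ⟨n, hn0, hntun⟩)
    have h2 : s B ≤ μ B := iSup_le fun p => measure_mono Set.inter_subset_left
    have h3 : s B / 2 < s B := ENNReal.half_lt_self h1.ne' (h2.trans_lt hBfin).ne
    obtain ⟨⟨n, hn⟩, hlt⟩ := lt_iSup_iff.mp h3
    exact ⟨n, hn, hlt, (ENNReal.div_pos h1.ne' (by norm_num)).trans hlt⟩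
  -- totalized choice
  have hexists' : ∀ B : Set X, ∃ n : ℤ × ℤ,
      (MeasurableSet B ∧ 0 < μ B ∧ μ B < ⊤) →
      (Good n ∧ s B / 2 < μ (B ∩ T n ⁻¹' B) ∧ 0 < μ (B ∩ T n ⁻¹' B)) := by
    intro B
    by_cases h : MeasurableSet B ∧ 0 < μ B ∧ μ B < ⊤
    · obtain ⟨n, hn⟩ := hexists B h.1 h.2.1 h.2.2
      exact ⟨n, fun _ => hn⟩
    · exact ⟨0, fun h' => absurd h' h⟩
  choose nxt hnxt using hexists'
  -- the recursion
  set step : Set X → Set X := fun B =>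
    B \ ((B ∩ T (nxt B) ⁻¹' B) ∪ T (nxt B) '' (B ∩ T (nxt B) ⁻¹' B)) with hstepDef
  set B : ℕ → Set X := fun k => step^[k] A with hBDef
  set v : ℕ → ℤ × ℤ := fun k => nxt (B k) with hvDef
  set C : ℕ → Set X := fun k => B k ∩ T (v k) ⁻¹' (B k) with hCDef
  have hB0 : B 0 = A := rfl
  have hBsucc : ∀ k, B (k + 1) = B k \ (C k ∪ T (v k) '' C k) := by
    intro k
    show step^[k + 1] A = _
    rw [Function.iterate_succ_apply' step k A]
  have hBmeas : ∀ k, MeasurableSet (B k) := by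
    intro k
    induction k with
    | zero => exact hA
    | succ k ih =>
      rw [hBsucc]
      exact ih.diff (((ih.inter ((hmp (v k)).measurable ih)).union
        (himg_meas _ _ (ih.inter ((hmp (v k)).measurable ih)))))
  have hCmeas : ∀ k, MeasurableSet (C k) := fun k =>
    (hBmeas k).inter ((hmp (v k)).measurable (hBmeas k))
  have hImeas : ∀ k, MeasurableSet (T (v k) '' C k) := fun k => himg_meas _ _ (hCmeas k)
  have hBanti : Antitone B := by
    apply antitone_nat_of_succ_le
    intro k
    rw [hBsucc]
    exact Set.diff_subset
  have hBsubA : ∀ k, B k ⊆ A := fun k => hB0 ▸ hBanti (Nat.zero_le k)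
  have hBfin : ∀ k, μ (B k) < ⊤ := fun k => (measure_mono (hBsubA k)).trans_lt hAfin
  have hCsub : ∀ k, C k ⊆ B k := fun k => Set.inter_subset_left
  have hIsub : ∀ k, T (v k) '' C k ⊆ B k := by
    intro k
    calc T (v k) '' C k ⊆ T (v k) '' (T (v k) ⁻¹' (B k)) :=
          Set.image_mono Set.inter_subset_right
      _ ⊆ B k := Set.image_preimage_subset _ _
  have hImeasure : ∀ k, μ (T (v k) '' C k) = μ (C k) := fun k => himg_measure _ _ (hCmeas k)
  have hkey : ∀ i j, i < j → Disjoint (C i ∪ T (v i) '' C i) (B j) := by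
    intro i j hij
    have h1 : B j ⊆ B (i + 1) := hBanti hij
    have h2 : Disjoint (C i ∪ T (v i) '' C i) (B (i + 1)) := by
      rw [hBsucc]
      exact Set.disjoint_sdiff_right
    exact h2.mono_right h1
  have hdisjC : Pairwise (Function.onFun Disjoint C) := by
    intro i j hij
    rcases lt_or_gt_of_ne hij with h | h
    · exact ((hkey i j h).mono Set.subset_union_left (hCsub j)).symm.symm
    · exact ((hkey j i h).mono Set.subset_union_left (hCsub i)).symm
  have hdisjI : Pairwise (Function.onFun Disjoint fun k => T (v k) '' C k) := by
    intro i j hij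
    rcases lt_or_gt_of_ne hij with h | h
    · exact (hkey i j h).mono Set.subset_union_right (hIsub j)
    · exact ((hkey j i h).mono Set.subset_union_right (hIsub i)).symm
  have hspec : ∀ k, 0 < μ (B k) →
      Good (v k) ∧ s (B k) / 2 < μ (C k) ∧ 0 < μ (C k) :=
    fun k hk => hnxt (B k) ⟨hBmeas k, hk, hBfin k⟩
  have hstepmeas : ∀ k, μ (B k) ≤ μ (B (k + 1)) + 2 * μ (C k) := by
    intro k
    have hsub : B k ⊆ B (k + 1) ∪ (C k ∪ T (v k) '' C k) := by
      rw [hBsucc]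
      exact Set.subset_diff_union _ _
    calc μ (B k) ≤ μ (B (k + 1) ∪ (C k ∪ T (v k) '' C k)) := measure_mono hsub
      _ ≤ μ (B (k + 1)) + μ (C k ∪ T (v k) '' C k) := measure_union_le _ _
      _ ≤ μ (B (k + 1)) + (μ (C k) + μ (T (v k) '' C k)) :=
          add_le_add_right (measure_union_le _ _) _
      _ = μ (B (k + 1)) + 2 * μ (C k) := by rw [hImeasure k]; ring
  have hsum : ∀ N, μ A ≤ μ (B N) + 2 * ∑ i ∈ Finset.range N, μ (C i) := by
    intro N
    induction N with
    | zero => simp [hB0]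
    | succ N ih =>
      calc μ A ≤ μ (B N) + 2 * ∑ i ∈ Finset.range N, μ (C i) := ih
        _ ≤ (μ (B (N + 1)) + 2 * μ (C N)) + 2 * ∑ i ∈ Finset.range N, μ (C i) :=
            add_le_add_left (hstepmeas N) _
        _ = μ (B (N + 1)) + 2 * ∑ i ∈ Finset.range (N + 1), μ (C i) := by
            rw [Finset.sum_range_succ]; ring
  -- the total of the pieces is finite
  have htsum_le : ∑' i, μ (C i) ≤ μ A := by
    rw [← measure_iUnion hdisjC hCmeas]
    exact measure_mono (Set.iUnion_subset fun i => (hCsub i).trans (hBsubA i))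
  -- the residual intersection is null
  have hInter : μ (⋂ k, B k) = 0 := by
    by_contra h
    have hIpos : 0 < μ (⋂ k, B k) := pos_iff_ne_zero.mpr h
    have hImeas' : MeasurableSet (⋂ k, B k) := MeasurableSet.iInter fun k => hBmeas k
    obtain ⟨m, hm0, hmtun, hmpos⟩ := hθ ε hε _ hImeas' hIpos
    set c : ENNReal := μ ((⋂ k, B k) ∩ T m ⁻¹' (⋂ k, B k)) with hcDef
    have hclow : ∀ k, c / 2 ≤ μ (C k) := by
      intro k
      have hBk : 0 < μ (B k) := hIpos.trans_le (measure_mono (Set.iInter_subset B k))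
      have h1 : c ≤ μ (B k ∩ T m ⁻¹' (B k)) := by
        apply measure_mono
        exact Set.inter_subset_inter (Set.iInter_subset B k)
          (Set.preimage_mono (Set.iInter_subset B k))
      have h2 : c ≤ s (B k) :=
        h1.trans (le_iSup (fun p : {n : ℤ × ℤ // Good n} => μ (B k ∩ T p.1 ⁻¹' (B k)))
          ⟨m, hm0, hmtun⟩)
      have h3 := (hspec k hBk).2.1
      exact (ENNReal.div_le_div_right h2 2).trans h3.le
    have htop : (⊤ : ENNReal) ≤ ∑' i, μ (C i) := by
      have h1 : ∑' (_ : ℕ), c / 2 ≤ ∑' i, μ (C i) := ENNReal.tsum_le_tsum hclow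
      rwa [ENNReal.tsum_const_eq_top_of_ne_zero
        (ENNReal.div_pos hmpos.ne' (by norm_num)).ne'] at h1
    exact (htop.trans_lt (htsum_le.trans_lt hAfin)).false
  have htend : Filter.Tendsto (fun N => μ (B N)) Filter.atTop (nhds 0) := by
    have := MeasureTheory.tendsto_measure_iInter_atTop
      (fun k => (hBmeas k).nullMeasurableSet) hBanti ⟨0, (hBfin 0).ne⟩
    rwa [hInter] at this
  have htotal : μ A ≤ 2 * ∑' i, μ (C i) := by
    have h2 : Filter.Tendsto (fun N => μ (B N) + 2 * ∑ i ∈ Finset.range N, μ (C i))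
        Filter.atTop (nhds (0 + 2 * ∑' i, μ (C i))) :=
      htend.add (ENNReal.Tendsto.const_mul (ENNReal.tendsto_nat_tsum _)
        (Or.inr (by norm_num)))
    have h3 := ge_of_tendsto' h2 hsum
    simpa using h3
  -- α μ A < total
  have hαlt : ENNReal.ofReal α * μ A < ∑' i, μ (C i) := by
    have h1 : ENNReal.ofReal α * μ A < ENNReal.ofReal (1/2) * μ A := by
      rw [ENNReal.mul_lt_mul_iff_left hApos.ne' hAfin.ne]
      exact ENNReal.ofReal_lt_ofReal_iff (by norm_num) |>.mpr hα2
    have h2 : ENNReal.ofReal (1/2) = 2⁻¹ := by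
      rw [one_div, ENNReal.ofReal_inv_of_pos (by norm_num), ENNReal.ofReal_ofNat]
    have h3 : ENNReal.ofReal (1/2) * μ A ≤ ∑' i, μ (C i) := by
      rw [h2]
      calc 2⁻¹ * μ A ≤ 2⁻¹ * (2 * ∑' i, μ (C i)) := mul_le_mul_right htotal _
        _ = ∑' i, μ (C i) := by
            rw [← mul_assoc, ENNReal.inv_mul_cancel (by norm_num) (by norm_num), one_mul]
    exact h1.trans_le h3
  -- find the minimal prefix
  have hNex : ∃ N, ENNReal.ofReal α * μ A < ∑ i ∈ Finset.range N, μ (C i) :=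
    ((ENNReal.tendsto_nat_tsum _).eventually (lt_mem_nhds hαlt)).exists
  set k := Nat.find hNex with hkDef
  have hkspec : ENNReal.ofReal α * μ A < ∑ i ∈ Finset.range k, μ (C i) := Nat.find_spec hNex
  have hBpos : ∀ i, i < k → 0 < μ (B i) := by
    intro i hi
    by_contra h
    have h0 : μ (B i) = 0 := by simpa using h
    have hS : ∑ j ∈ Finset.range i, μ (C j) ≤ ENNReal.ofReal α * μ A :=
      not_lt.mp (Nat.find_min hNex hi)
    have h1 : μ A ≤ 2 * (ENNReal.ofReal α * μ A) := by
      calc μ A ≤ μ (B i) + 2 * ∑ j ∈ Finset.range i, μ (C j) := hsum i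
        _ = 2 * ∑ j ∈ Finset.range i, μ (C j) := by rw [h0, zero_add]
        _ ≤ 2 * (ENNReal.ofReal α * μ A) := mul_le_mul_right hS _
    have h2 : 2 * (ENNReal.ofReal α * μ A) < μ A := by
      rw [← mul_assoc]
      nth_rewrite 2 [← one_mul (μ A)]
      rw [ENNReal.mul_lt_mul_iff_left hApos.ne' hAfin.ne]
      calc 2 * ENNReal.ofReal α = ENNReal.ofReal (2 * α) := by
            rw [ENNReal.ofReal_mul (by norm_num), ENNReal.ofReal_ofNat]
        _ < 1 := ENNReal.ofReal_lt_one.mpr (by linarith)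
    exact absurd (h1.trans_lt h2) (lt_irrefl _)
  have hCpos : ∀ i, i < k → 0 < μ (C i) := fun i hi => (hspec i (hBpos i hi)).2.2
  have hGoodv : ∀ i, i < k → Good (v i) := fun i hi => (hspec i (hBpos i hi)).1
  -- assemble the answer
  refine ⟨k, fun i => C i.val, fun i => v i.val, fun i => hCmeas i.val,
    fun i => (hCsub i.val).trans (hBsubA i.val), fun i => hCpos i.val i.isLt,
    fun i j hij => hdisjC (Fin.val_injective.ne hij),
    fun i => (hGoodv i.val i.isLt).2,
    fun i => (hIsub i.val).trans (hBsubA i.val),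
    fun i j hij => hdisjI (Fin.val_injective.ne hij), ?_, ?_⟩
  · have h1 := measure_iUnion (μ := μ) (f := fun i : Fin k => C i.val)
      (fun i j hij => hdisjC (Fin.val_injective.ne hij)) (fun i => hCmeas i.val)
    rw [h1, tsum_fintype]
    rw [Fin.sum_univ_eq_sum_range (fun i => μ (C i)) k]
    exact hkspec
  · have h1 := measure_iUnion (μ := μ) (f := fun i : Fin k => T (v i.val) '' C i.val)
      (fun i j hij => hdisjI (Fin.val_injective.ne hij)) (fun i => hImeas i.val)
    rw [h1, tsum_fintype]
    have h2 : ∑ i : Fin k, μ (T (v i.val) '' C i.val) = ∑ i : Fin k, μ (C i.val) :=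
      Finset.sum_congr rfl fun i _ => hImeasure i.val
    rw [h2, Fin.sum_univ_eq_sum_range (fun i => μ (C i)) k]
    exact hkspec
end
end

section
/- Let (X, μ, T) be a rank one measure preserving Z²-action with associated towers {τ_i}, and let I be a level of the tower τ_i. Then for u ∈ Z², T^u I ∩ I ≠ ∅ (as a positive-measure intersection) if and only if u is a time of strong recurrence for the tower τ_i, i.e., u maps the base of one slice of τ_i inside some later tower τ_{i+j} to the base of another slice of τ_i in τ_{i+j}. -/
open MeasureTheory

noncomputable section

/-- `v` lies in the square `B_m = [0,m)² ∩ ℤ²`. -/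
def inB (m : ℕ) (v : ℤ × ℤ) : Prop :=
  0 ≤ v.1 ∧ v.1 < (m : ℤ) ∧ 0 ≤ v.2 ∧ v.2 < (m : ℤ)

/-- A cutting-and-stacking (rank one) structure for a measure preserving `ℤ²`-action `T`:
a sequence of towers `τ_i` with levels `I i v` indexed by `B_{n i}`, on which `T` acts by
translating indices, each tower `τ_{i+1}` being built from at least two slices of `τ_i`
(placed with base points `pos i 1`), and more generally with `pos i j` recording the base
points of the slices of `τ_i` inside `τ_{i+j}`. -/
structure CutStack {X : Type*} [MeasurableSpace X]
    (μ : Measure X) (T : ℤ × ℤ → X → X) where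
  n : ℕ → ℕ
  I : ℕ → ℤ × ℤ → Set X
  pos : ℕ → ℕ → Finset (ℤ × ℤ)
  n_mono : StrictMono n
  meas : ∀ i v, MeasurableSet (I i v)
  disj : ∀ i, ∀ v w : ℤ × ℤ, v ≠ w → Disjoint (I i v) (I i w)
  eqmeas : ∀ i, ∀ v w : ℤ × ℤ, inB (n i) v → inB (n i) w → μ (I i v) = μ (I i w)
  base_pos : ∀ i, 0 < μ (I i 0)
  base_fin : ∀ i, μ (I i 0) < ⊤
  meas_to_zero : Filter.Tendsto (fun i => μ (I i 0)) Filter.atTop (nhds 0)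
  translate : ∀ i, ∀ v w : ℤ × ℤ, inB (n i) v → inB (n i) (v + w) →
    ∀ x ∈ I i v, T w x ∈ I i (v + w)
  pos_inB : ∀ i j, ∀ p ∈ pos i j, ∀ v : ℤ × ℤ, inB (n i) v → inB (n (i + j)) (p + v)
  slice_sub : ∀ i j, 1 ≤ j → ∀ p ∈ pos i j, ∀ v : ℤ × ℤ, inB (n i) v →
    I (i + j) (p + v) ⊆ I i v
  slice_cover : ∀ i j, 1 ≤ j → ∀ v : ℤ × ℤ, inB (n i) v →
    I i v ⊆ ⋃ p ∈ pos i j, I (i + j) (p + v)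
  num_slices : ∀ i, 2 ≤ (pos i 1).card

/-- `u` is a time of strong recurrence for the tower `τ_i`: for some `j ≥ 1`, `u` is the
difference of the base points of two slices of `τ_i` inside `τ_{i+j}`. -/
def StrongRecTime {X : Type*} [MeasurableSpace X] {μ : Measure X}
    {T : ℤ × ℤ → X → X} (C : CutStack μ T) (i : ℕ) (u : ℤ × ℤ) : Prop :=
  ∃ j, 1 ≤ j ∧ ∃ p ∈ C.pos i j, ∃ q ∈ C.pos i j, u = q - p

/-! ### Auxiliary machinery -/

def badW (a : ℤ) (N : ℕ) (W : ℤ) : Prop := ¬ (0 ≤ W + a ∧ W + a < (N : ℤ))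

section Aux

variable {X : Type*} [MeasurableSpace X] {μ : Measure X} {T : ℤ × ℤ → X → X}

theorem aux_eq_of_mem (C : CutStack μ T) {k : ℕ} {w w' : ℤ × ℤ} {x : X}
    (h : x ∈ C.I k w) (h' : x ∈ C.I k w') : w = w' := by
  by_contra hne
  exact Set.disjoint_left.mp (C.disj k w w' hne) h h'

theorem aux_inB_zero {m : ℕ} (hm : 1 ≤ m) : inB m (0 : ℤ × ℤ) := by
  constructor
  · exact le_refl _
  refine ⟨?_, le_refl _, ?_⟩ <;> · show (0:ℤ) < (m:ℤ); exact_mod_cast hm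

theorem aux_meas_level (C : CutStack μ T) {k : ℕ} (hk : 1 ≤ C.n k) {w : ℤ × ℤ}
    (hw : inB (C.n k) w) : μ (C.I k w) = μ (C.I k 0) :=
  C.eqmeas k w 0 hw (aux_inB_zero hk)

theorem aux_level_pos (C : CutStack μ T) {k : ℕ} (hk : 1 ≤ C.n k) {w : ℤ × ℤ}
    (hw : inB (C.n k) w) : 0 < μ (C.I k w) := by
  rw [aux_meas_level C hk hw]; exact C.base_pos k

theorem aux_n_one (C : CutStack μ T) {i : ℕ} {v : ℤ × ℤ} (hv : inB (C.n i) v) :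
    1 ≤ C.n i := by
  have h1 := hv.1; have h2 := hv.2.1; omega

theorem aux_n_mono (C : CutStack μ T) {k k' : ℕ} (h : k ≤ k') : C.n k ≤ C.n k' :=
  C.n_mono.monotone h

/-- position exists -/
theorem aux_pos_exists (C : CutStack μ T) {i j : ℕ} (hj : 1 ≤ j) {v : ℤ × ℤ}
    (hv : inB (C.n i) v) {x : X} (hx : x ∈ C.I i v) :
    ∃ p ∈ C.pos i j, x ∈ C.I (i + j) (p + v) := by
  have := C.slice_cover i j hj v hv hx
  simpa using this

/-- indices of distinct slices with distinct offsets are distinct -/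
theorem aux_slice_index_inj (C : CutStack μ T) {k : ℕ} (hk : 1 ≤ C.n k)
    {r s w w' : ℤ × ℤ} (hr : r ∈ C.pos k 1) (hs : s ∈ C.pos k 1)
    (hw : inB (C.n k) w) (hw' : inB (C.n k) w') (he : r + w = s + w') :
    r = s ∧ w = w' := by
  have hww' : w = w' := by
    by_contra hne
    have h1 : C.I (k+1) (r + w) ⊆ C.I k w := C.slice_sub k 1 le_rfl r hr w hw
    have h2 : C.I (k+1) (s + w') ⊆ C.I k w' := C.slice_sub k 1 le_rfl s hs w' hw'
    have hpos : 0 < μ (C.I (k+1) (r + w)) := by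
      refine aux_level_pos C ?_ (C.pos_inB k 1 r hr w hw)
      have := C.n_mono (by omega : k < k + 1)
      omega
    have hnull : μ (C.I (k+1) (r + w)) = 0 := by
      have hsub : C.I (k+1) (r + w) ⊆ (∅ : Set X) := by
        intro x hx
        exact Set.disjoint_left.mp (C.disj k w w' hne) (h1 hx) (h2 (he ▸ hx))
      exact le_antisymm (le_trans (measure_mono hsub) (le_of_eq measure_empty)) zero_le
    exact absurd hnull (ne_of_gt hpos)
  refine ⟨?_, hww'⟩
  rw [hww'] at he
  exact add_right_cancel he

/-- doubling of the tower sizes -/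
theorem aux_n_double (C : CutStack μ T) (k : ℕ) (hk : 1 ≤ C.n k) :
    2 * C.n k ≤ C.n (k + 1) := by
  obtain ⟨r, hr, s, hs, hrs⟩ := Finset.one_lt_card.mp (C.num_slices k)
  by_contra hlt
  push_neg at hlt
  set N := C.n k with hN
  set N' := C.n (k+1) with hN'
  have hcorner : inB N ((N : ℤ) - 1, (N : ℤ) - 1) := by
    constructor
    · simp; omega
    · refine ⟨by simp, by simp; omega, by simp⟩
  have hrb := C.pos_inB k 1 r hr _ (aux_inB_zero hk)
  have hsb := C.pos_inB k 1 s hs _ (aux_inB_zero hk)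
  have hrc := C.pos_inB k 1 r hr _ hcorner
  have hsc := C.pos_inB k 1 s hs _ hcorner
  simp only [add_zero] at hrb hsb
  obtain ⟨hr1, hr2, hr3, hr4⟩ := hrb
  obtain ⟨hs1, hs2, hs3, hs4⟩ := hsb
  have hrc1 : r.1 + ((N : ℤ) - 1) < N' := by
    have := hrc.2.1; simpa using this
  have hrc2 : r.2 + ((N : ℤ) - 1) < N' := by
    have := hrc.2.2.2; simpa using this
  have hsc1 : s.1 + ((N : ℤ) - 1) < N' := by
    have := hsc.2.1; simpa using this
  have hsc2 : s.2 + ((N : ℤ) - 1) < N' := by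
    have := hsc.2.2.2; simpa using this
  -- overlap witness
  have h1 : max r.1 s.1 - r.1 < (N : ℤ) := by omega
  have h2 : max r.2 s.2 - r.2 < (N : ℤ) := by omega
  have h1' : max r.1 s.1 - s.1 < (N : ℤ) := by omega
  have h2' : max r.2 s.2 - s.2 < (N : ℤ) := by omega
  have hwB : inB N (max r.1 s.1 - r.1, max r.2 s.2 - r.2) := ⟨by simp, by simpa using h1, by simp, by simpa using h2⟩
  have hwB' : inB N (max r.1 s.1 - s.1, max r.2 s.2 - s.2) := ⟨by simp, by simpa using h1', by simp, by simpa using h2'⟩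
  have he : r + (max r.1 s.1 - r.1, max r.2 s.2 - r.2) = s + (max r.1 s.1 - s.1, max r.2 s.2 - s.2) := by
    apply Prod.ext <;> simp
  exact hrs (aux_slice_index_inj C hk hr hs hwB hwB' he).1

end Aux
open scoped ENNReal NNReal
section Aux2

variable {X : Type*} [MeasurableSpace X] {μ : Measure X} {T : ℤ × ℤ → X → X}

/-- a level splits into `card (pos k 1)` equal sublevels -/
theorem aux_level_split (C : CutStack μ T) {k : ℕ} (hk : 1 ≤ C.n k) {w : ℤ × ℤ}
    (hw : inB (C.n k) w) :
    μ (C.I k w) = (C.pos k 1).card * μ (C.I (k + 1) 0) := by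
  have hEq : C.I k w = ⋃ r ∈ C.pos k 1, C.I (k + 1) (r + w) := by
    apply subset_antisymm
    · exact C.slice_cover k 1 le_rfl w hw
    · refine Set.iUnion₂_subset fun r hr => C.slice_sub k 1 le_rfl r hr w hw
  have hdisj : ((C.pos k 1 : Finset (ℤ × ℤ)) : Set (ℤ × ℤ)).PairwiseDisjoint
      (fun r => C.I (k + 1) (r + w)) := by
    intro r _ s _ hrs
    exact C.disj (k+1) _ _ (fun h => hrs (by exact (add_right_cancel h)))
  rw [hEq, measure_biUnion_finset hdisj (fun r _ => C.meas _ _)]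
  have hk1 : 1 ≤ C.n (k + 1) := by
    have := C.n_mono (by omega : k < k + 1); omega
  rw [Finset.sum_congr rfl (fun r hr => aux_meas_level C hk1 (C.pos_inB k 1 r hr w hw))]
  simp [mul_comm]

/-- measure of a set covered by levels -/
theorem aux_meas_le_card (C : CutStack μ T) {k : ℕ} (hk : 1 ≤ C.n k)
    {F : Finset (ℤ × ℤ)} (hF : ∀ w ∈ F, inB (C.n k) w) {S : Set X}
    (hS : S ⊆ ⋃ w ∈ F, C.I k w) :
    μ S ≤ F.card * μ (C.I k 0) := by
  calc μ S ≤ μ (⋃ w ∈ F, C.I k w) := measure_mono hS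
    _ ≤ ∑ w ∈ F, μ (C.I k w) := measure_biUnion_finset_le F _
    _ = ∑ _w ∈ F, μ (C.I k 0) := Finset.sum_congr rfl (fun w hw => aux_meas_level C hk (hF w hw))
    _ = F.card * μ (C.I k 0) := by simp

/-- total measure of disjoint levels inside a set -/
theorem aux_card_mul_le (C : CutStack μ T) {k : ℕ} (hk : 1 ≤ C.n k)
    {F : Finset (ℤ × ℤ)} (hF : ∀ w ∈ F, inB (C.n k) w) {B : Set X}
    (hsub : ∀ w ∈ F, C.I k w ⊆ B) :
    (F.card : ℝ≥0∞) * μ (C.I k 0) ≤ μ B := by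
  have hdisj : ((F : Finset (ℤ × ℤ)) : Set (ℤ × ℤ)).PairwiseDisjoint (fun w => C.I k w) := by
    intro r _ s _ hrs
    exact C.disj k _ _ hrs
  calc (F.card : ℝ≥0∞) * μ (C.I k 0) = ∑ w ∈ F, μ (C.I k w) := by
        rw [Finset.sum_congr rfl (fun w hw => aux_meas_level C hk (hF w hw))]; simp
    _ = μ (⋃ w ∈ F, C.I k w) := (measure_biUnion_finset hdisj (fun r _ => C.meas _ _)).symm
    _ ≤ μ B := measure_mono (Set.iUnion₂_subset hsub)

end Aux2
section Aux3

variable {X : Type*} [MeasurableSpace X] {μ : Measure X} {T : ℤ × ℤ → X → X}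

/-- the four-route dichotomy -/
theorem aux_four_route (C : CutStack μ T)
    (hadd : ∀ m n x, T (m + n) x = T m (T n x)) (hzero : ∀ x, T 0 x = x)
    {i : ℕ} {v : ℤ × ℤ} (hv : inB (C.n i) v) {u : ℤ × ℤ} {j : ℕ} (hj : 1 ≤ j)
    {p q : ℤ × ℤ} (hp : p ∈ C.pos i j) (hq : q ∈ C.pos i j) {x : X}
    (hx : x ∈ C.I (i + j) (p + v)) (hy : T u x ∈ C.I (i + j) (q + v))
    (hnot : ¬ StrongRecTime C i u) :
    (badW u.1 (C.n (i+j)) ((p+v).1) ∧ badW (-u.1) (C.n (i+j)) ((q+v).1)) ∨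
    (badW u.2 (C.n (i+j)) ((p+v).2) ∧ badW (-u.2) (C.n (i+j)) ((q+v).2)) := by
  set N := C.n (i + j) with hN
  have hpB : inB N (p + v) := C.pos_inB i j p hp v hv
  have hqB : inB N (q + v) := C.pos_inB i j q hq v hv
  have key : q + v = p + v + u → False := by
    intro h
    refine hnot ⟨j, hj, p, hp, q, hq, ?_⟩
    have e1 := congrArg Prod.fst h
    have e2 := congrArg Prod.snd h
    simp only [Prod.fst_add, Prod.snd_add] at e1 e2
    rw [Prod.ext_iff]
    constructor <;> simp only [Prod.fst_sub, Prod.snd_sub] <;> omega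
  obtain ⟨hp1, hp2, hp3, hp4⟩ := hpB
  obtain ⟨hq1, hq2, hq3, hq4⟩ := hqB
  simp only [Prod.fst_add, Prod.snd_add] at hp1 hp2 hp3 hp4 hq1 hq2 hq3 hq4
  have hpB : inB N (p + v) := C.pos_inB i j p hp v hv
  have hqB : inB N (q + v) := C.pos_inB i j q hq v hv
  have c1 : ¬ badW u.1 N ((p+v).1) → ¬ badW u.2 N ((p+v).2) → False := by
    intro h1 h2
    rw [badW, not_not] at h1 h2
    simp only [Prod.fst_add, Prod.snd_add] at h1 h2
    have hB : inB N (p + v + u) := by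
      refine ⟨?_, ?_, ?_, ?_⟩ <;>
        · simp only [Prod.fst_add, Prod.snd_add]
          omega
    exact key (aux_eq_of_mem C hy (C.translate (i+j) (p+v) u hpB hB x hx))
  have c2 : ¬ badW (-u.1) N ((q+v).1) → ¬ badW (-u.2) N ((q+v).2) → False := by
    intro h1 h2
    rw [badW, not_not] at h1 h2
    simp only [Prod.fst_add, Prod.snd_add] at h1 h2
    have hB : inB N (q + v + (-u)) := by
      refine ⟨?_, ?_, ?_, ?_⟩ <;>
        · simp only [Prod.fst_add, Prod.snd_add, Prod.fst_neg, Prod.snd_neg]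
          omega
    have hxy : T (-u) (T u x) = x := by
      rw [← hadd, neg_add_cancel, hzero]
    have h3 := C.translate (i+j) (q+v) (-u) hqB hB _ hy
    rw [hxy] at h3
    have he := aux_eq_of_mem C hx h3
    have e1 := congrArg Prod.fst he
    have e2 := congrArg Prod.snd he
    simp only [Prod.fst_add, Prod.snd_add, Prod.fst_neg, Prod.snd_neg] at e1 e2
    apply key
    rw [Prod.ext_iff]
    constructor <;> simp only [Prod.fst_add, Prod.snd_add] <;> omega
  have c3 : ¬ badW u.1 N ((p+v).1) → ¬ badW (-u.2) N ((q+v).2) → False := by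
    intro h1 h2
    rw [badW, not_not] at h1 h2
    simp only [Prod.fst_add, Prod.snd_add] at h1 h2
    have hw1 : ((u.1, (0:ℤ)) : ℤ × ℤ).1 = u.1 := rfl
    have hw2 : ((u.1, (0:ℤ)) : ℤ × ℤ).2 = 0 := rfl
    have hv1 : (((0:ℤ), -u.2) : ℤ × ℤ).1 = 0 := rfl
    have hv2 : (((0:ℤ), -u.2) : ℤ × ℤ).2 = -u.2 := rfl
    have hB1 : inB N (p + v + (u.1, 0)) := by
      refine ⟨?_, ?_, ?_, ?_⟩ <;>
        · simp only [Prod.fst_add, Prod.snd_add, hw1, hw2]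
          omega
    have hB2 : inB N (q + v + (0, -u.2)) := by
      refine ⟨?_, ?_, ?_, ?_⟩ <;>
        · simp only [Prod.fst_add, Prod.snd_add, hv1, hv2]
          omega
    have h3 := C.translate (i+j) (p+v) (u.1, 0) hpB hB1 x hx
    have h4 := C.translate (i+j) (q+v) (0, -u.2) hqB hB2 _ hy
    have hz : T (0, -u.2) (T u x) = T (u.1, 0) x := by
      rw [← hadd]
      congr 1
      apply Prod.ext <;> simp
    rw [hz] at h4
    have he := aux_eq_of_mem C h3 h4
    have e1 := congrArg Prod.fst he
    have e2 := congrArg Prod.snd he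
    simp only [Prod.fst_add, Prod.snd_add, hw1, hw2, hv1, hv2] at e1 e2
    apply key
    rw [Prod.ext_iff]
    constructor <;> simp only [Prod.fst_add, Prod.snd_add] <;> omega
  have c4 : ¬ badW u.2 N ((p+v).2) → ¬ badW (-u.1) N ((q+v).1) → False := by
    intro h1 h2
    rw [badW, not_not] at h1 h2
    simp only [Prod.fst_add, Prod.snd_add] at h1 h2
    have hw1 : (((0:ℤ), u.2) : ℤ × ℤ).1 = 0 := rfl
    have hw2 : (((0:ℤ), u.2) : ℤ × ℤ).2 = u.2 := rfl
    have hv1 : ((-u.1, (0:ℤ)) : ℤ × ℤ).1 = -u.1 := rfl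
    have hv2 : ((-u.1, (0:ℤ)) : ℤ × ℤ).2 = 0 := rfl
    have hB1 : inB N (p + v + (0, u.2)) := by
      refine ⟨?_, ?_, ?_, ?_⟩ <;>
        · simp only [Prod.fst_add, Prod.snd_add, hw1, hw2]
          omega
    have hB2 : inB N (q + v + (-u.1, 0)) := by
      refine ⟨?_, ?_, ?_, ?_⟩ <;>
        · simp only [Prod.fst_add, Prod.snd_add, hv1, hv2]
          omega
    have h3 := C.translate (i+j) (p+v) (0, u.2) hpB hB1 x hx
    have h4 := C.translate (i+j) (q+v) (-u.1, 0) hqB hB2 _ hy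
    have hz : T (-u.1, 0) (T u x) = T (0, u.2) x := by
      rw [← hadd]
      congr 1
      apply Prod.ext <;> simp
    rw [hz] at h4
    have he := aux_eq_of_mem C h3 h4
    have e1 := congrArg Prod.fst he
    have e2 := congrArg Prod.snd he
    simp only [Prod.fst_add, Prod.snd_add, hw1, hw2, hv1, hv2] at e1 e2
    apply key
    rw [Prod.ext_iff]
    constructor <;> simp only [Prod.fst_add, Prod.snd_add] <;> omega
  tauto

end Aux3
/-- the union of bad levels at stage `j` (P-side with parameter `a`) -/
def Gset {X : Type*} [MeasurableSpace X] {μ : Measure X} {T : ℤ × ℤ → X → X}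
    (C : CutStack μ T) (i : ℕ) (v : ℤ × ℤ) (π : ℤ × ℤ → ℤ) (a : ℤ) (j : ℕ) : Set X :=
  ⋃ p ∈ C.pos i j, ⋃ (_ : badW a (C.n (i + j)) (π (p + v))), C.I (i + j) (p + v)

section Aux4

variable {X : Type*} [MeasurableSpace X] {μ : Measure X} {T : ℤ × ℤ → X → X}

theorem Gset_mem {C : CutStack μ T} {i : ℕ} {v : ℤ × ℤ} {π : ℤ × ℤ → ℤ} {a : ℤ} {j : ℕ}
    {x : X} : x ∈ Gset C i v π a j ↔
      ∃ p ∈ C.pos i j, badW a (C.n (i + j)) (π (p + v)) ∧ x ∈ C.I (i + j) (p + v) := by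
  simp only [Gset, Set.mem_iUnion]
  tauto

theorem Gset_meas (C : CutStack μ T) (i : ℕ) (v : ℤ × ℤ) (π : ℤ × ℤ → ℤ) (a : ℤ) (j : ℕ) :
    MeasurableSet (Gset C i v π a j) := by
  apply Set.Finite.measurableSet_biUnion (Finset.finite_toSet _)
  intro p _
  exact MeasurableSet.iUnion (fun _ => C.meas _ _)

/-- bounds on the coordinates of slice base points -/
theorem aux_pos_bounds (C : CutStack μ T) {k d : ℕ} (hk : 1 ≤ C.n k)
    {r : ℤ × ℤ} (hr : r ∈ C.pos k d) :
    0 ≤ r.1 ∧ 0 ≤ r.2 ∧ r.1 + C.n k ≤ C.n (k + d) ∧ r.2 + C.n k ≤ C.n (k + d) := by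
  have h0 := C.pos_inB k d r hr 0 (aux_inB_zero hk)
  have hcorner : inB (C.n k) ((C.n k : ℤ) - 1, (C.n k : ℤ) - 1) := by
    refine ⟨by simp; omega, by simp, by simp; omega, by simp⟩
  have hc := C.pos_inB k d r hr _ hcorner
  obtain ⟨a1, a2, a3, a4⟩ := h0
  obtain ⟨b1, b2, b3, b4⟩ := hc
  simp only [Prod.fst_add, Prod.snd_add, add_zero, Prod.fst_zero, Prod.snd_zero] at a1 a2 a3 a4 b1 b2 b3 b4
  refine ⟨a1, a3, by omega, by omega⟩

/-- downward propagation of badness -/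
theorem aux_prop (C : CutStack μ T) {i : ℕ} {v : ℤ × ℤ} (hv : inB (C.n i) v)
    (π : ℤ × ℤ → ℤ) (hπ : ∀ (m : ℕ) w, inB m w → 0 ≤ π w ∧ π w < (m : ℤ))
    (hπadd : ∀ w w', π (w + w') = π w + π w') (hπdiag : ∀ c : ℤ, π (c, c) = c)
    (a : ℤ) {j j' : ℕ} (hj : 1 ≤ j) (hjj' : j ≤ j')
    {y : X} (hy : y ∈ C.I i v) (h : y ∈ Gset C i v π a j') : y ∈ Gset C i v π a j := by
  obtain ⟨p', hp', hbad', hyp'⟩ := Gset_mem.mp h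
  obtain ⟨p, hp, hyp⟩ := aux_pos_exists C hj hv hy
  rcases eq_or_lt_of_le hjj' with hje | hlt
  · subst hje
    have he := aux_eq_of_mem C hyp hyp'
    exact Gset_mem.mpr ⟨p, hp, by rw [he]; exact hbad', hyp⟩
  · have hNk : 1 ≤ C.n (i + j) := by
      have := C.n_mono (by omega : i < i + j)
      have := aux_n_one C hv
      omega
    have hcov := C.slice_cover (i+j) (j'-j) (by omega) (p+v) (C.pos_inB i j p hp v hv) hyp
    have hE : i + j + (j' - j) = i + j' := by omega
    rw [hE] at hcov
    simp only [Set.mem_iUnion] at hcov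
    obtain ⟨r, hr, hyr⟩ := hcov
    have he := aux_eq_of_mem C hyr hyp'
    have hrb := aux_pos_bounds C hNk hr
    rw [hE] at hrb
    -- π bounds on r
    have hr0 : 0 ≤ π r := by
      have := C.pos_inB (i+j) (j'-j) r hr 0 (aux_inB_zero hNk)
      rw [hE] at this
      have := (hπ _ _ this).1
      simpa using this
    have hrU : π r + (C.n (i+j) : ℤ) ≤ C.n (i + j') := by
      have hcorner : inB (C.n (i+j)) ((C.n (i+j) : ℤ) - 1, (C.n (i+j) : ℤ) - 1) := by
        refine ⟨by simp; omega, by simp, by simp; omega, by simp⟩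
      have hB := C.pos_inB (i+j) (j'-j) r hr _ hcorner
      rw [hE] at hB
      have h2 := (hπ _ _ hB).2
      rw [hπadd] at h2
      rw [hπdiag] at h2
      omega
    have hW : 0 ≤ π (p + v) ∧ π (p + v) < (C.n (i+j) : ℤ) :=
      hπ _ _ (C.pos_inB i j p hp v hv)
    have hW' : π (p' + v) = π r + π (p + v) := by rw [← he, hπadd]
    refine Gset_mem.mpr ⟨p, hp, ?_, hyp⟩
    intro hcon
    apply hbad'
    rw [hW']
    obtain ⟨hc1, hc2⟩ := hcon
    obtain ⟨hW1, hW2⟩ := hW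
    constructor <;> omega

end Aux4
section Aux5

variable {X : Type*} [MeasurableSpace X] {μ : Measure X} {T : ℤ × ℤ → X → X}

theorem aux_pos_pi_bounds (C : CutStack μ T) {k : ℕ} (hk : 1 ≤ C.n k)
    (π : ℤ × ℤ → ℤ) (hπ : ∀ (m : ℕ) w, inB m w → 0 ≤ π w ∧ π w < (m : ℤ))
    (hπadd : ∀ w w', π (w + w') = π w + π w') (hπdiag : ∀ c : ℤ, π (c, c) = c)
    {d : ℕ} {r : ℤ × ℤ} (hr : r ∈ C.pos k d) :
    0 ≤ π r ∧ π r + (C.n k : ℤ) ≤ C.n (k + d) := by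
  constructor
  · have h0 := C.pos_inB k d r hr 0 (aux_inB_zero hk)
    have := (hπ _ _ h0).1
    simpa using this
  · have hcorner : inB (C.n k) ((C.n k : ℤ) - 1, (C.n k : ℤ) - 1) := by
      refine ⟨by simp; omega, by simp, by simp; omega, by simp⟩
    have hB := C.pos_inB k d r hr _ hcorner
    have h2 := (hπ _ _ hB).2
    rw [hπadd, hπdiag] at h2
    omega

theorem aux_descent (C : CutStack μ T) (hmp : ∀ n, MeasurePreserving (T n) μ μ)
    {i : ℕ} {v : ℤ × ℤ} (hv : inB (C.n i) v)
    (π : ℤ × ℤ → ℤ) (hπ : ∀ (m : ℕ) w, inB m w → 0 ≤ π w ∧ π w < (m : ℤ))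
    (hπadd : ∀ w w', π (w + w') = π w + π w') (hπdiag : ∀ c : ℤ, π (c, c) = c)
    (u : ℤ × ℤ) {S : Set X} (hSm : MeasurableSet S) (hS0 : 0 < μ S)
    (hSP : ∀ x ∈ S, ∀ j, 1 ≤ j → x ∈ Gset C i v π (π u) j)
    (hSQ : ∀ x ∈ S, ∀ j, 1 ≤ j → T u x ∈ Gset C i v π (-(π u)) j) : False := by
  classical
  set a := π u with ha
  have hm1 : 1 ≤ C.n i := aux_n_one C hv
  obtain ⟨x₀, hx₀⟩ : S.Nonempty := nonempty_of_measure_ne_zero hS0.ne'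
  have ha0 : a ≠ 0 := by
    obtain ⟨p, hp, hbad, hxp⟩ := Gset_mem.mp (hSP x₀ hx₀ 1 le_rfl)
    intro h
    have hb := hπ _ _ (C.pos_inB i 1 p hp v hv)
    exact hbad ⟨by omega, by omega⟩
  set J₀ : ℕ := 2 * a.natAbs + 2 with hJ₀
  have hJ₀1 : 1 ≤ J₀ := by omega
  have hNbig : ∀ K : ℕ, 2 * a.natAbs + 2 ≤ C.n (i + (J₀ + K)) := by
    intro K
    calc 2 * a.natAbs + 2 ≤ i + (J₀ + K) := by omega
      _ ≤ C.n (i + (J₀ + K)) := C.n_mono.le_apply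
  have main : ∀ K : ℕ, ∃ FP FQ : Finset (ℤ × ℤ),
      (∀ w ∈ FP, inB (C.n (i + (J₀ + K))) w ∧ badW a (C.n (i + (J₀ + K))) (π w)) ∧
      (∀ w ∈ FQ, inB (C.n (i + (J₀ + K))) w ∧ badW (-a) (C.n (i + (J₀ + K))) (π w)) ∧
      (S ⊆ ⋃ w ∈ FP, C.I (i + (J₀ + K)) w) ∧
      (∀ x ∈ S, T u x ∈ ⋃ w ∈ FQ, C.I (i + (J₀ + K)) w) ∧
      ((4 : ℝ≥0∞) ^ K * ((FP.card : ℝ≥0∞) * ((FQ.card : ℝ≥0∞) *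
        μ (C.I (i + (J₀ + K)) 0) ^ 2)) ≤ μ (C.I i 0) ^ 2) := by
    intro K
    induction K with
    | zero =>
      have hN : 1 ≤ C.n (i + J₀) := le_trans hm1 (aux_n_mono C (by omega))
      set FPb : Finset (ℤ × ℤ) := ((C.pos i J₀).filter
        (fun p => badW a (C.n (i + J₀)) (π (p + v)))).image (fun p => p + v) with hFPb
      set FQb : Finset (ℤ × ℤ) := ((C.pos i J₀).filter
        (fun p => badW (-a) (C.n (i + J₀)) (π (p + v)))).image (fun p => p + v) with hFQb
      have hFPmem : ∀ w ∈ FPb, ∃ p, (p ∈ C.pos i J₀ ∧ badW a (C.n (i + J₀)) (π (p + v))) ∧ w = p + v := by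
        intro w hw
        rw [hFPb, Finset.mem_image] at hw
        obtain ⟨p, hp, rfl⟩ := hw
        rw [Finset.mem_filter] at hp
        exact ⟨p, hp, rfl⟩
      have hFQmem : ∀ w ∈ FQb, ∃ p, (p ∈ C.pos i J₀ ∧ badW (-a) (C.n (i + J₀)) (π (p + v))) ∧ w = p + v := by
        intro w hw
        rw [hFQb, Finset.mem_image] at hw
        obtain ⟨p, hp, rfl⟩ := hw
        rw [Finset.mem_filter] at hp
        exact ⟨p, hp, rfl⟩
      refine ⟨FPb, FQb, ?_, ?_, ?_, ?_, ?_⟩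
      · intro w hw
        obtain ⟨p, ⟨hp, hbad⟩, rfl⟩ := hFPmem w hw
        exact ⟨C.pos_inB i J₀ p hp v hv, hbad⟩
      · intro w hw
        obtain ⟨p, ⟨hp, hbad⟩, rfl⟩ := hFQmem w hw
        exact ⟨C.pos_inB i J₀ p hp v hv, hbad⟩
      · intro x hx
        obtain ⟨p, hp, hbad, hxp⟩ := Gset_mem.mp (hSP x hx J₀ hJ₀1)
        simp only [Set.mem_iUnion]
        refine ⟨p + v, ?_, hxp⟩
        rw [hFPb, Finset.mem_image]
        exact ⟨p, Finset.mem_filter.mpr ⟨hp, hbad⟩, rfl⟩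
      · intro x hx
        obtain ⟨p, hp, hbad, hxp⟩ := Gset_mem.mp (hSQ x hx J₀ hJ₀1)
        simp only [Set.mem_iUnion]
        refine ⟨p + v, ?_, hxp⟩
        rw [hFQb, Finset.mem_image]
        exact ⟨p, Finset.mem_filter.mpr ⟨hp, hbad⟩, rfl⟩
      · have hsub : ∀ (F : Finset (ℤ × ℤ)), (∀ w ∈ F, ∃ p, p ∈ C.pos i J₀ ∧ w = p + v) →
            (F.card : ℝ≥0∞) * μ (C.I (i + J₀) 0) ≤ μ (C.I i 0) := by
          intro F hF
          rw [← aux_meas_level C hm1 hv]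
          refine aux_card_mul_le C hN ?_ ?_
          · intro w hw
            obtain ⟨p, hp, rfl⟩ := hF w hw
            exact C.pos_inB i J₀ p hp v hv
          · intro w hw
            obtain ⟨p, hp, rfl⟩ := hF w hw
            exact C.slice_sub i J₀ hJ₀1 p hp v hv
        have hP := hsub FPb (fun w hw => by
          obtain ⟨p, ⟨hp, _⟩, rfl⟩ := hFPmem w hw
          exact ⟨p, hp, rfl⟩)
        have hQ := hsub FQb (fun w hw => by
          obtain ⟨p, ⟨hp, _⟩, rfl⟩ := hFQmem w hw
          exact ⟨p, hp, rfl⟩)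
        calc (4 : ℝ≥0∞) ^ 0 * ((FPb.card : ℝ≥0∞) * ((FQb.card : ℝ≥0∞) *
              μ (C.I (i + (J₀ + 0)) 0) ^ 2))
            = ((FPb.card : ℝ≥0∞) * μ (C.I (i + J₀) 0)) *
              ((FQb.card : ℝ≥0∞) * μ (C.I (i + J₀) 0)) := by ring
          _ ≤ μ (C.I i 0) * μ (C.I i 0) := mul_le_mul' hP hQ
          _ = μ (C.I i 0) ^ 2 := (sq _).symm
    | succ K ih =>
      obtain ⟨FP, FQ, h1, h2, h3, h4, h5⟩ := ih
      have hE : i + (J₀ + (K + 1)) = i + (J₀ + K) + 1 := by omega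
      rw [hE]
      have hE2 : i + (J₀ + K + 1) = i + (J₀ + K) + 1 := by omega
      set N := C.n (i + (J₀ + K)) with hNdef
      set N' := C.n (i + (J₀ + K) + 1) with hN'def
      have hN1 : 1 ≤ N := le_trans hm1 (aux_n_mono C (by omega))
      have hN2 : 2 * N ≤ N' := aux_n_double C _ hN1
      have hNa : 2 * a.natAbs + 2 ≤ N := hNbig K
      set c : Finset (ℤ × ℤ) := C.pos (i + (J₀ + K)) 1 with hcdef
      have hc2 : 2 ≤ c.card := C.num_slices _
      have hrbound : ∀ r ∈ c, 0 ≤ π r ∧ π r + (N : ℤ) ≤ (N' : ℤ) := by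
        intro r hr
        have hb := aux_pos_pi_bounds C hN1 π hπ hπadd hπdiag hr
        exact ⟨hb.1, by exact_mod_cast hb.2⟩
      set RP : Finset (ℤ × ℤ) := c.filter (fun r => ∃ W : ℤ,
        (0 ≤ W ∧ W < (N : ℤ)) ∧ badW a N W ∧ (0 ≤ W + π r ∧ W + π r < (N' : ℤ)) ∧
        badW a N' (W + π r)) with hRPdef
      set RQ : Finset (ℤ × ℤ) := c.filter (fun r => ∃ W : ℤ,
        (0 ≤ W ∧ W < (N : ℤ)) ∧ badW (-a) N W ∧ (0 ≤ W + π r ∧ W + π r < (N' : ℤ)) ∧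
        badW (-a) N' (W + π r)) with hRQdef
      have hdisjR : Disjoint RP RQ := by
        rw [Finset.disjoint_left]
        intro r hrP hrQ
        rw [hRPdef, Finset.mem_filter] at hrP
        rw [hRQdef, Finset.mem_filter] at hrQ
        obtain ⟨hrc, W, ⟨hW0, hW1⟩, hbW, ⟨hWr0, hWr1⟩, hbWr⟩ := hrP
        obtain ⟨-, W', ⟨hW0', hW1'⟩, hbW', ⟨hWr0', hWr1'⟩, hbWr'⟩ := hrQ
        obtain ⟨hr0, hrU⟩ := hrbound r hrc
        simp only [badW] at hbW hbWr hbW' hbWr'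
        omega
      have hcard : RP.card + RQ.card ≤ c.card := by
        rw [← Finset.card_union_of_disjoint hdisjR]
        exact Finset.card_le_card (Finset.union_subset (Finset.filter_subset _ _)
          (Finset.filter_subset _ _))
      set FP' : Finset (ℤ × ℤ) := FP.biUnion (fun w =>
        ((c.filter (fun r => inB N' (w + r) ∧ badW a N' (π (w + r)))).image
          (fun r => w + r))) with hFP'def
      set FQ' : Finset (ℤ × ℤ) := FQ.biUnion (fun w =>
        ((c.filter (fun r => inB N' (w + r) ∧ badW (-a) N' (π (w + r)))).image
          (fun r => w + r))) with hFQ'def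
      have hcardP : FP'.card ≤ FP.card * RP.card := by
        refine le_trans Finset.card_biUnion_le (le_trans (Finset.sum_le_sum (g := fun _ => RP.card)
          ?_) ?_)
        · intro w hw
          refine le_trans Finset.card_image_le (Finset.card_le_card ?_)
          intro r hrf
          rw [Finset.mem_filter] at hrf
          obtain ⟨hrc, hinB, hbad⟩ := hrf
          rw [hRPdef, Finset.mem_filter]
          have hwb := hπ _ _ (h1 w hw).1
          have hwr := hπ _ _ hinB
          rw [hπadd] at hwr
          exact ⟨hrc, π w, ⟨hwb.1, hwb.2⟩, (h1 w hw).2, ⟨hwr.1, hwr.2⟩, by rw [← hπadd]; exact hbad⟩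
        · rw [Finset.sum_const, smul_eq_mul]
      have hcardQ : FQ'.card ≤ FQ.card * RQ.card := by
        refine le_trans Finset.card_biUnion_le (le_trans (Finset.sum_le_sum (g := fun _ => RQ.card)
          ?_) ?_)
        · intro w hw
          refine le_trans Finset.card_image_le (Finset.card_le_card ?_)
          intro r hrf
          rw [Finset.mem_filter] at hrf
          obtain ⟨hrc, hinB, hbad⟩ := hrf
          rw [hRQdef, Finset.mem_filter]
          have hwb := hπ _ _ (h2 w hw).1
          have hwr := hπ _ _ hinB
          rw [hπadd] at hwr
          exact ⟨hrc, π w, ⟨hwb.1, hwb.2⟩, (h2 w hw).2, ⟨hwr.1, hwr.2⟩, by rw [← hπadd]; exact hbad⟩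
        · rw [Finset.sum_const, smul_eq_mul]
      refine ⟨FP', FQ', ?_, ?_, ?_, ?_, ?_⟩
      · intro w' hw'
        rw [hFP'def, Finset.mem_biUnion] at hw'
        obtain ⟨w, hw, hw'mem⟩ := hw'
        rw [Finset.mem_image] at hw'mem
        obtain ⟨r, hrf, rfl⟩ := hw'mem
        rw [Finset.mem_filter] at hrf
        exact ⟨hrf.2.1, hrf.2.2⟩
      · intro w' hw'
        rw [hFQ'def, Finset.mem_biUnion] at hw'
        obtain ⟨w, hw, hw'mem⟩ := hw'
        rw [Finset.mem_image] at hw'mem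
        obtain ⟨r, hrf, rfl⟩ := hw'mem
        rw [Finset.mem_filter] at hrf
        exact ⟨hrf.2.1, hrf.2.2⟩
      · intro x hx
        have hxU := h3 hx
        simp only [Set.mem_iUnion] at hxU
        obtain ⟨w, hw, hxw⟩ := hxU
        obtain ⟨p', hp', hbad', hxp'⟩ := Gset_mem.mp (hSP x hx (J₀ + K + 1) (by omega))
        rw [hE2] at hbad' hxp'
        have hcov := C.slice_cover (i + (J₀ + K)) 1 le_rfl w (h1 w hw).1 hxw
        simp only [Set.mem_iUnion] at hcov
        obtain ⟨r, hr, hxr⟩ := hcov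
        have he : r + w = p' + v := aux_eq_of_mem C hxr hxp'
        simp only [Set.mem_iUnion]
        refine ⟨w + r, ?_, by rwa [add_comm w r]⟩
        rw [hFP'def, Finset.mem_biUnion]
        refine ⟨w, hw, ?_⟩
        rw [Finset.mem_image]
        refine ⟨r, ?_, rfl⟩
        rw [Finset.mem_filter]
        have hpvB : inB N' (p' + v) := by
          have := C.pos_inB i (J₀ + K + 1) p' hp' v hv
          rwa [hE2] at this
        refine ⟨hr, ?_, ?_⟩
        · rwa [add_comm w r, he]
        · rw [add_comm w r, he]; exact hbad'
      · intro x hx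
        have hxU := h4 x hx
        simp only [Set.mem_iUnion] at hxU
        obtain ⟨w, hw, hxw⟩ := hxU
        obtain ⟨p', hp', hbad', hxp'⟩ := Gset_mem.mp (hSQ x hx (J₀ + K + 1) (by omega))
        rw [hE2] at hbad' hxp'
        have hcov := C.slice_cover (i + (J₀ + K)) 1 le_rfl w (h2 w hw).1 hxw
        simp only [Set.mem_iUnion] at hcov
        obtain ⟨r, hr, hxr⟩ := hcov
        have he : r + w = p' + v := aux_eq_of_mem C hxr hxp'
        simp only [Set.mem_iUnion]
        refine ⟨w + r, ?_, by rwa [add_comm w r]⟩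
        rw [hFQ'def, Finset.mem_biUnion]
        refine ⟨w, hw, ?_⟩
        rw [Finset.mem_image]
        refine ⟨r, ?_, rfl⟩
        rw [Finset.mem_filter]
        refine ⟨hr, ?_, ?_⟩
        · rw [add_comm w r, he]
          have := C.pos_inB i (J₀ + K + 1) p' hp' v hv
          rwa [hE2] at this
        · rw [add_comm w r, he]; exact hbad'
      · -- measure estimate
        have hnat2 : 4 * (RP.card * RQ.card) ≤ c.card ^ 2 := by
          zify
          nlinarith [sq_nonneg ((RP.card : ℤ) - (RQ.card : ℤ)),
            (by exact_mod_cast hcard : (RP.card : ℤ) + RQ.card ≤ c.card)]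
        have hnatC : 4 * (FP'.card * FQ'.card) ≤ FP.card * FQ.card * c.card ^ 2 := by
          calc 4 * (FP'.card * FQ'.card) ≤ 4 * ((FP.card * RP.card) * (FQ.card * RQ.card)) := by
                exact Nat.mul_le_mul_left _ (Nat.mul_le_mul hcardP hcardQ)
            _ = (FP.card * FQ.card) * (4 * (RP.card * RQ.card)) := by ring
            _ ≤ (FP.card * FQ.card) * c.card ^ 2 := Nat.mul_le_mul_left _ hnat2
        have hsplit : μ (C.I (i + (J₀ + K)) 0) =
            (c.card : ℝ≥0∞) * μ (C.I (i + (J₀ + K) + 1) 0) :=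
          aux_level_split C hN1 (aux_inB_zero hN1)
        have hcast : ((4 * (FP'.card * FQ'.card) : ℕ) : ℝ≥0∞) ≤
            ((FP.card * FQ.card * c.card ^ 2 : ℕ) : ℝ≥0∞) := Nat.cast_le.mpr hnatC
        push_cast at hcast
        calc (4 : ℝ≥0∞) ^ (K + 1) * ((FP'.card : ℝ≥0∞) * ((FQ'.card : ℝ≥0∞) *
              μ (C.I (i + (J₀ + K) + 1) 0) ^ 2))
            = (4 : ℝ≥0∞) ^ K * μ (C.I (i + (J₀ + K) + 1) 0) ^ 2 *
              (4 * ((FP'.card : ℝ≥0∞) * (FQ'.card : ℝ≥0∞))) := by ring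
          _ ≤ (4 : ℝ≥0∞) ^ K * μ (C.I (i + (J₀ + K) + 1) 0) ^ 2 *
              ((FP.card : ℝ≥0∞) * (FQ.card : ℝ≥0∞) * (c.card : ℝ≥0∞) ^ 2) :=
              mul_le_mul_right hcast _
          _ = (4 : ℝ≥0∞) ^ K * ((FP.card : ℝ≥0∞) * ((FQ.card : ℝ≥0∞) *
              ((c.card : ℝ≥0∞) * μ (C.I (i + (J₀ + K) + 1) 0)) ^ 2)) := by ring
          _ = (4 : ℝ≥0∞) ^ K * ((FP.card : ℝ≥0∞) * ((FQ.card : ℝ≥0∞) *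
              μ (C.I (i + (J₀ + K)) 0) ^ 2)) := by rw [hsplit]
          _ ≤ μ (C.I i 0) ^ 2 := h5
  -- conclude
  have hfin : ∀ K : ℕ, (4 : ℝ≥0∞) ^ K * μ S ^ 2 ≤ μ (C.I i 0) ^ 2 := by
    intro K
    obtain ⟨FP, FQ, h1, h2, h3, h4, h5⟩ := main K
    have hNK : 1 ≤ C.n (i + (J₀ + K)) := le_trans hm1 (aux_n_mono C (by omega))
    have hμP : μ S ≤ (FP.card : ℝ≥0∞) * μ (C.I (i + (J₀ + K)) 0) :=
      aux_meas_le_card C hNK (fun w hw => (h1 w hw).1) h3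
    have hμQ : μ S ≤ (FQ.card : ℝ≥0∞) * μ (C.I (i + (J₀ + K)) 0) := by
      have hUm : MeasurableSet (⋃ w ∈ FQ, C.I (i + (J₀ + K)) w) :=
        Set.Finite.measurableSet_biUnion (Finset.finite_toSet _) (fun w _ => C.meas _ _)
      calc μ S ≤ μ (T u ⁻¹' (⋃ w ∈ FQ, C.I (i + (J₀ + K)) w)) :=
            measure_mono (fun x hx => h4 x hx)
        _ = μ (⋃ w ∈ FQ, C.I (i + (J₀ + K)) w) :=
            (hmp u).measure_preimage hUm.nullMeasurableSet
        _ ≤ (FQ.card : ℝ≥0∞) * μ (C.I (i + (J₀ + K)) 0) :=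
            aux_meas_le_card C hNK (fun w hw => (h2 w hw).1) subset_rfl
    calc (4 : ℝ≥0∞) ^ K * μ S ^ 2 = (4 : ℝ≥0∞) ^ K * (μ S * μ S) := by rw [sq]
      _ ≤ (4 : ℝ≥0∞) ^ K * (((FP.card : ℝ≥0∞) * μ (C.I (i + (J₀ + K)) 0)) *
          ((FQ.card : ℝ≥0∞) * μ (C.I (i + (J₀ + K)) 0))) :=
          mul_le_mul_right (mul_le_mul' hμP hμQ) _
      _ = (4 : ℝ≥0∞) ^ K * ((FP.card : ℝ≥0∞) * ((FQ.card : ℝ≥0∞) *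
          μ (C.I (i + (J₀ + K)) 0) ^ 2)) := by ring
      _ ≤ μ (C.I i 0) ^ 2 := h5
  have hε0 : 0 < μ S ^ 2 := ENNReal.pow_pos hS0 2
  have hBfin : μ (C.I i 0) ^ 2 < ⊤ := ENNReal.pow_lt_top (C.base_fin i)
  have hεfin : μ S ^ 2 ≠ ⊤ := by
    intro htop
    have := hfin 0
    rw [pow_zero, one_mul, htop] at this
    exact absurd (eq_top_iff.mpr this) hBfin.ne
  obtain ⟨K, hK⟩ := ENNReal.exists_nat_gt
    (ENNReal.div_lt_top hBfin.ne hε0.ne').ne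
  have h1 : μ (C.I i 0) ^ 2 < K * μ S ^ 2 := by
    rw [ENNReal.div_lt_iff (Or.inl hε0.ne') (Or.inl hεfin)] at hK
    exact hK
  have h2 : (K : ℝ≥0∞) * μ S ^ 2 ≤ (4 : ℝ≥0∞) ^ K * μ S ^ 2 := by
    refine mul_le_mul_left ?_ _
    have hKlt : K ≤ 4 ^ K := le_of_lt (Nat.lt_pow_self (n := K) (by norm_num))
    calc (K : ℝ≥0∞) ≤ ((4 ^ K : ℕ) : ℝ≥0∞) := Nat.cast_le.mpr hKlt
      _ = (4 : ℝ≥0∞) ^ K := by push_cast; ring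
  exact absurd (hfin K) (not_le.mpr (lt_of_lt_of_le h1 h2))

end Aux5
/-- A level `I` of the tower `τ_i` meets `T^u I` in positive measure if and only if `u` is a
time of strong recurrence for `τ_i`. -/
theorem level_return_iff_strongRecTime
    {X : Type*} [MeasurableSpace X] (μ : Measure X)
    (T : ℤ × ℤ → X → X)
    (hmp : ∀ n, MeasurePreserving (T n) μ μ)
    (hadd : ∀ m n x, T (m + n) x = T m (T n x)) (hzero : ∀ x, T 0 x = x)
    (C : CutStack μ T)
    (i : ℕ) (v : ℤ × ℤ) (hv : inB (C.n i) v) (u : ℤ × ℤ) :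
    0 < μ (C.I i v ∩ T u ⁻¹' C.I i v) ↔ StrongRecTime C i u := by
  constructor
  · intro hA
    by_contra hnot
    set A := C.I i v ∩ T u ⁻¹' C.I i v with hAdef
    have hAm : MeasurableSet A := (C.meas i v).inter ((hmp u).measurable (C.meas i v))
    have hπ₁ : ∀ (m : ℕ) (w : ℤ × ℤ), inB m w → 0 ≤ Prod.fst w ∧ Prod.fst w < (m : ℤ) :=
      fun m w h => ⟨h.1, h.2.1⟩
    have hπ₂ : ∀ (m : ℕ) (w : ℤ × ℤ), inB m w → 0 ≤ Prod.snd w ∧ Prod.snd w < (m : ℤ) :=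
      fun m w h => ⟨h.2.2.1, h.2.2.2⟩
    have step1 : ∀ x ∈ A, ∀ j, 1 ≤ j →
        (x ∈ Gset C i v Prod.fst u.1 j ∧ T u x ∈ Gset C i v Prod.fst (-u.1) j) ∨
        (x ∈ Gset C i v Prod.snd u.2 j ∧ T u x ∈ Gset C i v Prod.snd (-u.2) j) := by
      intro x hx j hj
      obtain ⟨p, hp, hxp⟩ := aux_pos_exists C hj hv hx.1
      obtain ⟨q, hq, hyq⟩ := aux_pos_exists C hj hv hx.2
      rcases aux_four_route C hadd hzero hv hj hp hq hxp hyq hnot with ⟨hb1, hb2⟩ | ⟨hb1, hb2⟩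
      · exact Or.inl ⟨Gset_mem.mpr ⟨p, hp, hb1, hxp⟩, Gset_mem.mpr ⟨q, hq, hb2, hyq⟩⟩
      · exact Or.inr ⟨Gset_mem.mpr ⟨p, hp, hb1, hxp⟩, Gset_mem.mpr ⟨q, hq, hb2, hyq⟩⟩
    have split : ∀ x ∈ A,
        (∀ j, 1 ≤ j → (x ∈ Gset C i v Prod.fst u.1 j ∧ T u x ∈ Gset C i v Prod.fst (-u.1) j)) ∨
        (∀ j, 1 ≤ j → (x ∈ Gset C i v Prod.snd u.2 j ∧ T u x ∈ Gset C i v Prod.snd (-u.2) j)) := by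
      intro x hx
      by_cases hc : ∀ j, 1 ≤ j →
          (x ∈ Gset C i v Prod.fst u.1 j ∧ T u x ∈ Gset C i v Prod.fst (-u.1) j)
      · exact Or.inl hc
      · right
        push_neg at hc
        obtain ⟨j₁, hj₁, hns⟩ := hc
        intro j hj
        have hj' : j ≤ max j j₁ := le_max_left _ _
        have hj₁' : j₁ ≤ max j j₁ := le_max_right _ _
        rcases step1 x hx (max j j₁) (le_trans hj hj') with ⟨ha1, ha2⟩ | ⟨hb1, hb2⟩
        · exact absurd
            (aux_prop C hv Prod.fst hπ₁ (fun _ _ => rfl) (fun _ => rfl) (-u.1) hj₁ hj₁' hx.2 ha2)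
            (hns (aux_prop C hv Prod.fst hπ₁ (fun _ _ => rfl) (fun _ => rfl) u.1 hj₁ hj₁' hx.1 ha1))
        · exact
            ⟨aux_prop C hv Prod.snd hπ₂ (fun _ _ => rfl) (fun _ => rfl) u.2 hj hj' hx.1 hb1,
             aux_prop C hv Prod.snd hπ₂ (fun _ _ => rfl) (fun _ => rfl) (-u.2) hj hj' hx.2 hb2⟩
    set S1 : Set X := A ∩ ⋂ (j : ℕ), ⋂ (_ : 1 ≤ j),
      (Gset C i v Prod.fst u.1 j ∩ T u ⁻¹' Gset C i v Prod.fst (-u.1) j) with hS1def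
    set S2 : Set X := A ∩ ⋂ (j : ℕ), ⋂ (_ : 1 ≤ j),
      (Gset C i v Prod.snd u.2 j ∩ T u ⁻¹' Gset C i v Prod.snd (-u.2) j) with hS2def
    have hS1m : MeasurableSet S1 := hAm.inter (MeasurableSet.iInter (fun j =>
      MeasurableSet.iInter (fun _ => (Gset_meas C i v Prod.fst u.1 j).inter
        ((hmp u).measurable (Gset_meas C i v Prod.fst (-u.1) j)))))
    have hS2m : MeasurableSet S2 := hAm.inter (MeasurableSet.iInter (fun j =>
      MeasurableSet.iInter (fun _ => (Gset_meas C i v Prod.snd u.2 j).inter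
        ((hmp u).measurable (Gset_meas C i v Prod.snd (-u.2) j)))))
    have hcover : A ⊆ S1 ∪ S2 := by
      intro x hx
      rcases split x hx with h | h
      · exact Or.inl ⟨hx, by
          simp only [Set.mem_iInter]
          intro j hj
          exact ⟨(h j hj).1, (h j hj).2⟩⟩
      · exact Or.inr ⟨hx, by
          simp only [Set.mem_iInter]
          intro j hj
          exact ⟨(h j hj).1, (h j hj).2⟩⟩
    have hpos : 0 < μ S1 ∨ 0 < μ S2 := by
      by_contra hcon
      push_neg at hcon
      have h1 : μ S1 = 0 := le_antisymm hcon.1 zero_le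
      have h2 : μ S2 = 0 := le_antisymm hcon.2 zero_le
      have : μ A ≤ μ S1 + μ S2 :=
        le_trans (measure_mono hcover) (measure_union_le _ _)
      rw [h1, h2, add_zero] at this
      exact absurd (le_antisymm this zero_le) hA.ne'
    rcases hpos with hSpos | hSpos
    · refine aux_descent C hmp hv Prod.fst hπ₁ (fun _ _ => rfl) (fun _ => rfl) u hS1m hSpos
        ?_ ?_
      · intro x hx j hj
        have := hx.2
        simp only [Set.mem_iInter] at this
        exact (this j hj).1
      · intro x hx j hj
        have := hx.2
        simp only [Set.mem_iInter] at this
        exact (this j hj).2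
    · refine aux_descent C hmp hv Prod.snd hπ₂ (fun _ _ => rfl) (fun _ => rfl) u hS2m hSpos
        ?_ ?_
      · intro x hx j hj
        have := hx.2
        simp only [Set.mem_iInter] at this
        exact (this j hj).1
      · intro x hx j hj
        have := hx.2
        simp only [Set.mem_iInter] at this
        exact (this j hj).2
  · rintro ⟨j, hj, p, hp, q, hq, hu⟩
    have hN : 1 ≤ C.n (i + j) := le_trans (aux_n_one C hv) (aux_n_mono C (by omega))
    have hpB := C.pos_inB i j p hp v hv
    have hqB := C.pos_inB i j q hq v hv
    have he : p + v + u = q + v := by rw [hu]; ring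
    have hsubP : C.I (i + j) (p + v) ⊆ C.I i v ∩ T u ⁻¹' C.I i v := by
      intro x hx
      refine ⟨C.slice_sub i j hj p hp v hv hx, ?_⟩
      have hB : inB (C.n (i + j)) (p + v + u) := by rw [he]; exact hqB
      have hmem := C.translate (i + j) (p + v) u hpB hB x hx
      rw [he] at hmem
      exact C.slice_sub i j hj q hq v hv hmem
    exact lt_of_lt_of_le (aux_level_pos C hN hpB) (measure_mono hsubP)
end
end

section
/- There exists an infinite measure preserving, recurrent, ergodic Z²-action (X, μ, T) on a σ-finite Lebesgue space such that for every nonzero n ∈ Z², the Z-action (X, μ, {T^{kn}}_{k∈Z}) is not recurrent. -/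
open MeasureTheory

noncomputable section

variable {X : Type*} [MeasurableSpace X]

open Metric

lemma dense_val : Dense {x : ℝ | ∃ u : ℤ × ℤ, (u.1 : ℝ) * Real.sqrt 2 + (u.2 : ℝ) = x} := by
  set S := AddSubgroup.zmultiples (Real.sqrt 2) ⊔ AddSubgroup.zmultiples (1:ℝ) with hSdef
  have hsub : (S : Set ℝ) ⊆ {x | ∃ u : ℤ × ℤ, (u.1 : ℝ) * Real.sqrt 2 + (u.2 : ℝ) = x} := by
    intro x hx
    rw [hSdef, SetLike.mem_coe, AddSubgroup.mem_sup] at hx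
    obtain ⟨y, hy, z, hz, hyz⟩ := hx
    rw [AddSubgroup.mem_zmultiples_iff] at hy hz
    obtain ⟨m, hm⟩ := hy
    obtain ⟨n, hn⟩ := hz
    exact ⟨(m, n), by simp only [zsmul_eq_mul, mul_one] at hm hn; linarith⟩
  have hs2 : Real.sqrt 2 ∈ S :=
    AddSubgroup.mem_sup_left (AddSubgroup.mem_zmultiples _)
  have h1 : (1:ℝ) ∈ S :=
    AddSubgroup.mem_sup_right (AddSubgroup.mem_zmultiples _)
  have hd : Dense (S : Set ℝ) := by
    rcases S.dense_or_cyclic with h | ⟨a, ha⟩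
    · exact h
    · exfalso
      rw [ha, AddSubgroup.mem_closure_singleton] at hs2 h1
      obtain ⟨l, hl⟩ := hs2
      obtain ⟨k, hk⟩ := h1
      rw [zsmul_eq_mul] at hl hk
      have hk0 : (k:ℝ) ≠ 0 := by
        intro h; rw [h, zero_mul] at hk; exact one_ne_zero hk.symm
      refine irrational_sqrt_two ⟨(l : ℚ) / (k : ℚ), ?_⟩
      have ha' : a = 1 / (k:ℝ) := by field_simp at hk ⊢; linarith
      rw [ha'] at hl
      push_cast
      rw [← hl]; field_simp
  exact hd.mono hsub

lemma exists_density_point (S : Set ℝ) (hS : MeasurableSet S) (h : 0 < volume S) :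
    ∃ x : ℝ, ∀ᶠ r in nhdsWithin 0 (Set.Ioi 0),
      ENNReal.ofReal (3/2 * r) < volume (S ∩ closedBall x r) := by
  have hae := Besicovitch.ae_tendsto_measure_inter_div volume S
  have hne : (ae (volume.restrict S)).NeBot := by
    rw [ae_neBot]
    intro h0
    rw [← Measure.restrict_apply_univ S, h0] at h
    simp at h
  obtain ⟨x, hx⟩ := hae.exists
  refine ⟨x, ?_⟩
  have h34 : ENNReal.ofReal (3/4) < 1 := ENNReal.ofReal_lt_one.mpr (by norm_num)
  filter_upwards [hx.eventually (lt_mem_nhds h34), self_mem_nhdsWithin] with r hr hr0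
  rw [Set.mem_Ioi] at hr0
  have hball : volume (closedBall x r) = ENNReal.ofReal (2 * r) := Real.volume_closedBall x r
  rw [hball] at hr
  have hb0 : ENNReal.ofReal (2 * r) ≠ 0 := by
    simp only [ne_eq, ENNReal.ofReal_eq_zero, not_le]; linarith
  have hbt : ENNReal.ofReal (2 * r) ≠ ⊤ := ENNReal.ofReal_ne_top
  rw [ENNReal.lt_div_iff_mul_lt (Or.inl hb0) (Or.inl hbt)] at hr
  calc ENNReal.ofReal (3/2 * r) = ENNReal.ofReal (3/4) * ENNReal.ofReal (2 * r) := by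
        rw [← ENNReal.ofReal_mul (by norm_num)]
        ring_nf
    _ < volume (S ∩ closedBall x r) := hr

lemma overlap {S1 S2 : Set ℝ} (h2m : MeasurableSet S2)
    {x1 x2 r : ℝ} (hr : 0 < r) (hd : dist x2 x1 ≤ r/4)
    (h1 : ENNReal.ofReal (3/2*r) < volume (S1 ∩ closedBall x1 r))
    (h2 : ENNReal.ofReal (3/2*r) < volume (S2 ∩ closedBall x2 r)) :
    0 < volume (S1 ∩ S2) := by
  by_contra hc
  push_neg at hc
  have hz : volume (S1 ∩ S2) = 0 := le_antisymm hc zero_le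
  set U := S1 ∩ closedBall x1 r
  set V := S2 ∩ closedBall x2 r
  have hVm : MeasurableSet V := h2m.inter measurableSet_closedBall
  have key : volume (U ∪ V) + volume (U ∩ V) = volume U + volume V :=
    measure_union_add_inter U hVm
  have hUV1 : volume (U ∪ V) ≤ ENNReal.ofReal (2 * (r + r/4)) := by
    rw [← Real.volume_closedBall x1 (r + r/4)]
    refine measure_mono (Set.union_subset ?_ ?_)
    · exact (Set.inter_subset_right).trans
        (closedBall_subset_closedBall (by linarith))
    · exact (Set.inter_subset_right).trans
        (closedBall_subset_closedBall' (by linarith))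
  have hUV2 : volume (U ∩ V) ≤ volume (S1 ∩ S2) :=
    measure_mono (fun y hy => ⟨hy.1.1, hy.2.1⟩)
  have hlt : ENNReal.ofReal (3/2*r) + ENNReal.ofReal (3/2*r) < volume U + volume V :=
    ENNReal.add_lt_add h1 h2
  rw [← key] at hlt
  have : volume (U ∪ V) + volume (U ∩ V) ≤ ENNReal.ofReal (2 * (r + r/4)) + 0 := by
    exact add_le_add hUV1 (hUV2.trans_eq hz)
  rw [add_zero] at this
  have hfinal : ENNReal.ofReal (3/2*r) + ENNReal.ofReal (3/2*r)
      < ENNReal.ofReal (2 * (r + r/4)) := hlt.trans_le this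
  rw [← ENNReal.ofReal_add (by linarith) (by linarith)] at hfinal
  rw [ENNReal.ofReal_lt_ofReal_iff (by linarith)] at hfinal
  linarith

lemma val_ne_zero' {p q : ℤ} (h : ¬(p = 0 ∧ q = 0)) : (p:ℝ) * Real.sqrt 2 + (q:ℝ) ≠ 0 := by
  intro h0
  rcases eq_or_ne p 0 with hp | hp
  · subst hp
    simp only [Int.cast_zero, zero_mul, zero_add, Int.cast_eq_zero] at h0
    exact h ⟨rfl, h0⟩
  · have hp' : (p:ℝ) ≠ 0 := Int.cast_ne_zero.mpr hp
    refine irrational_sqrt_two ⟨-(q:ℚ)/(p:ℚ), ?_⟩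
    push_cast
    field_simp
    linarith


/-- There is an infinite measure preserving, recurrent, ergodic `ℤ²`-action on a σ-finite
space none of whose `ℤ` sub-actions is recurrent. -/
theorem exists_recurrent_action_no_recurrent_subaction :
    ∃ (X : Type) (_ : MeasurableSpace X) (μ : Measure X) (T : ℤ × ℤ → X → X),
      (∀ n, MeasurePreserving (T n) μ μ) ∧
      (∀ m n x, T (m + n) x = T m (T n x)) ∧ (∀ x, T 0 x = x) ∧
      SigmaFinite μ ∧ μ Set.univ = ⊤ ∧
      IsErgodicAction μ T ∧ IsRecurrentAction μ T ∧
      ∀ n : ℤ × ℤ, n ≠ 0 →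
        ¬ (∀ A : Set X, MeasurableSet A → 0 < μ A →
            ∃ k : ℤ, k ≠ 0 ∧ 0 < μ (A ∩ T (k * n.1, k * n.2) ⁻¹' A)) := by
  refine ⟨ℝ, inferInstance, volume,
    fun u x => x + ((u.1 : ℝ) * Real.sqrt 2 + (u.2 : ℝ)), ?_, ?_, ?_, ?_, ?_, ?_, ?_, ?_⟩
  · exact fun n => measurePreserving_add_right volume _
  · intro m n x
    simp only [Prod.fst_add, Prod.snd_add]
    push_cast
    ring
  · intro x; norm_num
  · infer_instance
  · exact Real.volume_univ
  · -- ergodicity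
    intro A hA hinv
    by_contra hc
    push_neg at hc
    obtain ⟨h1, h2⟩ := hc
    obtain ⟨a, ha⟩ := exists_density_point A hA (pos_iff_ne_zero.mpr h1)
    obtain ⟨b, hb⟩ := exists_density_point Aᶜ hA.compl (pos_iff_ne_zero.mpr h2)
    obtain ⟨r, hra, hrb, hr0'⟩ := (ha.and (hb.and self_mem_nhdsWithin)).exists
    have hr0 : 0 < r := hr0'
    obtain ⟨g, hgmem, hg⟩ := dense_val.exists_mem_open isOpen_Ioo
      (⟨b - a, by constructor <;> linarith⟩ :
        (Set.Ioo (b - a - r/4) (b - a + r/4)).Nonempty)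
    obtain ⟨u, hu⟩ := hgmem
    have hAshift : volume (A ∩ closedBall (a + g) r) = volume (A ∩ closedBall a r) := by
      have hmp := (measurePreserving_add_right volume g).measure_preimage
        ((hA.inter measurableSet_closedBall).nullMeasurableSet
          (μ := volume) (s := A ∩ closedBall (a + g) r))
      rw [← hmp]
      congr 1
      ext x
      have hxA : x + g ∈ A ↔ x ∈ A := by
        conv_rhs => rw [← hinv u]
        simp [hu]
      simp only [Set.mem_preimage, Set.mem_inter_iff, mem_closedBall, Real.dist_eq, hxA]
      constructor
      · rintro ⟨hxa, hd⟩; refine ⟨hxa, ?_⟩; rw [show x + g - (a + g) = x - a by ring] at hd; exact hd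
      · rintro ⟨hxa, hd⟩; refine ⟨hxa, ?_⟩; rw [show x + g - (a + g) = x - a by ring]; exact hd
    have : 0 < volume (A ∩ Aᶜ) := by
      refine overlap hA.compl hr0 ?_ (hAshift ▸ hra) hrb
      rw [Real.dist_eq]
      have := hg.1; have := hg.2
      rw [abs_le]; constructor <;> linarith
    simp at this
  · -- recurrence
    intro A hA hpos
    obtain ⟨x, hx⟩ := exists_density_point A hA hpos
    obtain ⟨r, hra, hr0'⟩ := (hx.and self_mem_nhdsWithin).exists
    have hr0 : 0 < r := hr0'
    obtain ⟨v, hvmem, hv⟩ := dense_val.exists_mem_open isOpen_Ioo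
      (⟨r/8, by constructor <;> linarith⟩ : (Set.Ioo (0:ℝ) (r/4)).Nonempty)
    obtain ⟨u, hu⟩ := hvmem
    refine ⟨u, ?_, ?_⟩
    · intro h0
      rw [h0] at hu
      simp at hu
      rw [← hu] at hv
      exact lt_irrefl 0 hv.1
    · have hS2m : MeasurableSet ((fun y => y + v) ⁻¹' A) :=
        hA.preimage (measurable_add_const v)
      have hshift : volume ((fun y => y + v) ⁻¹' A ∩ closedBall (x - v) r)
          = volume (A ∩ closedBall x r) := by
        have hmp := (measurePreserving_add_right volume v).measure_preimage
          ((hA.inter measurableSet_closedBall).nullMeasurableSet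
            (μ := volume) (s := A ∩ closedBall x r))
        rw [← hmp]
        congr 1
        ext y
        simp only [Set.mem_preimage, Set.mem_inter_iff, mem_closedBall, Real.dist_eq]
        rw [show y - (x - v) = y + v - x by ring]
      have hov : 0 < volume (A ∩ (fun y => y + v) ⁻¹' A) := by
        refine overlap hS2m hr0 ?_ hra (hshift ▸ hra)
        rw [Real.dist_eq]
        rw [show x - v - x = -v by ring, abs_neg, abs_of_pos hv.1]
        linarith [hv.2]
      convert hov using 3
      ext y
      simp [hu]
  · -- non-recurrence of subactions
    intro n hn hall
    have hγ : (n.1:ℝ) * Real.sqrt 2 + (n.2:ℝ) ≠ 0 := by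
      apply val_ne_zero'
      intro ⟨h1, h2⟩
      exact hn (Prod.ext h1 h2)
    obtain ⟨γ, hγdef⟩ : ∃ g : ℝ, (n.1:ℝ) * Real.sqrt 2 + (n.2:ℝ) = g := ⟨_, rfl⟩
    rw [hγdef] at hγ
    have hγpos : 0 < |γ| := abs_pos.mpr hγ
    obtain ⟨k, hk, hkpos⟩ := hall (Set.Ioo 0 (|γ|/2)) measurableSet_Ioo
      (by rw [Real.volume_Ioo]; exact ENNReal.ofReal_pos.mpr (by linarith))
    have hempty : Set.Ioo 0 (|γ|/2) ∩
        (fun x => x + ((((k * n.1 : ℤ)):ℝ) * Real.sqrt 2 + ((k * n.2 : ℤ):ℝ))) ⁻¹'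
          Set.Ioo 0 (|γ|/2) = ∅ := by
      ext y
      simp only [Set.mem_inter_iff, Set.mem_preimage, Set.mem_Ioo, Set.mem_empty_iff_false,
        iff_false, not_and, and_imp]
      intro hy1 hy2 h3 h4
      exfalso
      have hval : (((k * n.1 : ℤ)):ℝ) * Real.sqrt 2 + ((k * n.2 : ℤ):ℝ) = k * γ := by
        rw [← hγdef]; push_cast; ring
      rw [hval] at h3 h4
      have habs : |(k:ℝ) * γ| < |γ|/2 := abs_lt.mpr ⟨by linarith, by linarith⟩
      rw [abs_mul] at habs
      have h1k : (1:ℝ) ≤ |(k:ℝ)| := by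
        rw [← Int.cast_abs]
        exact_mod_cast Int.one_le_abs hk
      nlinarith
    rw [hempty] at hkpos
    simp at hkpos
end
end

section
/- Let (X, μ, T) be a measure preserving Z²-action on a σ-finite space, A a measurable set with 0 < μ(A) < ∞, ε > 0, and θ a direction such that for every measurable B ⊆ A with μ(B) > 0 there is n ∈ Z² in the ε-tunnel of θ with μ(B ∩ T^n B) > 0. Then there exist countably many pairwise disjoint positive-measure sets A₁, A₂, … ⊆ A and vectors v₁, v₂, … in the ε-tunnel of θ such that the sets T^{vᵢ}Aᵢ are subsets of A, the collection {Aᵢ} ∪ {T^{vᵢ}Aᵢ} need not be disjoint overall but satisfies μ(∪ᵢ (Aᵢ ∪ T^{vᵢ}Aᵢ)) = μ(A), and consequently 2·Σᵢ μ(Aᵢ) ≥ μ(A). -/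
open MeasureTheory

noncomputable section

variable {X : Type*} [MeasurableSpace X]

/-- The exhaustion step: if every positive measure subset of `A` returns to itself under some
vector in the `ε`-tunnel of `θ`, then `A` is exhausted by countably many pairwise disjoint
pieces together with their images. -/
theorem exhaustion_of_directional_recurrence
    {X : Type*} [MeasurableSpace X] (μ : Measure X) [SigmaFinite μ]
    (T : ℤ × ℤ → X → X)
    (hmp : ∀ n, MeasurePreserving (T n) μ μ)
    (hadd : ∀ m n x, T (m + n) x = T m (T n x)) (hzero : ∀ x, T 0 x = x)
    (A : Set X) (hA : MeasurableSet A) (hApos : 0 < μ A) (hAfin : μ A < ⊤)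
    (θ ε : ℝ) (hε : 0 < ε)
    (hrec : ∀ B : Set X, B ⊆ A → MeasurableSet B → 0 < μ B →
      ∃ n : ℤ × ℤ, n ≠ 0 ∧ InTunnel θ ε (toR n) ∧ 0 < μ (B ∩ T n ⁻¹' B)) :
    ∃ F : Set (Set X × (ℤ × ℤ)), F.Countable ∧
      (∀ p ∈ F, MeasurableSet p.1 ∧ p.1 ⊆ A ∧ 0 < μ p.1 ∧ p.2 ≠ 0 ∧
        InTunnel θ ε (toR p.2) ∧ T p.2 '' p.1 ⊆ A) ∧
      F.Pairwise (fun p q => Disjoint p.1 q.1) ∧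
      μ (⋃ p ∈ F, p.1 ∪ T p.2 '' p.1) = μ A ∧
      μ A ≤ 2 * ∑' p : F, μ (p : Set X × (ℤ × ℤ)).1 := by
  classical
  -- image as preimage
  have himg : ∀ (v : ℤ × ℤ) (C : Set X), T v '' C = T (-v) ⁻¹' C := by
    intro v C
    ext y
    constructor
    · rintro ⟨x, hx, rfl⟩
      show T (-v) (T v x) ∈ C
      rw [← hadd, neg_add_cancel, hzero]
      exact hx
    · intro hy
      refine ⟨T (-v) y, hy, ?_⟩
      show T v (T (-v) y) = y
      rw [← hadd, add_neg_cancel, hzero]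
  have himg_meas : ∀ (v : ℤ × ℤ) (C : Set X), MeasurableSet C → MeasurableSet (T v '' C) := by
    intro v C hC
    rw [himg]
    exact (hmp (-v)).measurable hC
  have himg_measure : ∀ (v : ℤ × ℤ) (C : Set X), MeasurableSet C → μ (T v '' C) = μ C := by
    intro v C hC
    rw [himg]
    exact (hmp (-v)).measure_preimage hC.nullMeasurableSet
  obtain ⟨n₀, hn₀ne, hn₀t, -⟩ := hrec A Set.Subset.rfl hA hApos
  -- admissibility
  set Good : Set X → Set X × (ℤ × ℤ) → Prop := fun R p =>
    MeasurableSet p.1 ∧ p.1 ⊆ R ∧ p.2 ≠ 0 ∧ InTunnel θ ε (toR p.2) ∧ T p.2 '' p.1 ⊆ A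
    with hGoodDef
  have hpick : ∀ R : Set X, ∃ p : Set X × (ℤ × ℤ), MeasurableSet R → R ⊆ A →
      Good R p ∧ ∀ q, Good R q → μ q.1 ≤ 2 * μ p.1 := by
    intro R
    by_cases hR : MeasurableSet R ∧ R ⊆ A
    · obtain ⟨hRm, hRA⟩ := hR
      set s : ENNReal := ⨆ (q : Set X × (ℤ × ℤ)) (_ : Good R q), μ q.1 with hs
      have hsA : s ≤ μ A := by
        refine iSup₂_le fun q hq => measure_mono (hq.2.1.trans hRA)
      have hgoodempty : Good R (∅, n₀) := by
        refine ⟨MeasurableSet.empty, Set.empty_subset _, hn₀ne, hn₀t, ?_⟩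
        simp
      rcases eq_or_ne s 0 with h0 | h0
      · refine ⟨(∅, n₀), fun _ _ => ⟨hgoodempty, fun q hq => ?_⟩⟩
        have : μ q.1 ≤ s := le_iSup₂_of_le q hq le_rfl
        exact le_trans (h0 ▸ this) zero_le
      · have hstop : s ≠ ⊤ := (hsA.trans_lt hAfin).ne
        have hhalf : s / 2 < s := ENNReal.half_lt_self h0 hstop
        rw [hs, lt_iSup_iff] at hhalf
        obtain ⟨q, hq⟩ := hhalf
        rw [lt_iSup_iff] at hq
        obtain ⟨hqg, hq⟩ := hq
        refine ⟨q, fun _ _ => ⟨hqg, fun q' hq' => ?_⟩⟩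
        have h1 : μ q'.1 ≤ s := le_iSup₂_of_le q' hq' le_rfl
        calc μ q'.1 ≤ s := h1
          _ = s / 2 + s / 2 := (ENNReal.add_halves s).symm
          _ ≤ μ q.1 + μ q.1 := add_le_add hq.le hq.le
          _ = 2 * μ q.1 := (two_mul _).symm
    · exact ⟨(∅, n₀), fun h1 h2 => absurd ⟨h1, h2⟩ hR⟩
  choose g hg using hpick
  -- the residual sets
  set Rs : ℕ → Set X := fun n =>
    Nat.rec A (fun _ Rn => Rn \ ((g Rn).1 ∪ T (g Rn).2 '' (g Rn).1)) n with hRs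
  have hRs0 : Rs 0 = A := rfl
  have hRsucc : ∀ n, Rs (n + 1) = Rs n \ ((g (Rs n)).1 ∪ T (g (Rs n)).2 '' (g (Rs n)).1) :=
    fun n => rfl
  set C : ℕ → Set X := fun n => (g (Rs n)).1 with hC
  set v : ℕ → ℤ × ℤ := fun n => (g (Rs n)).2 with hv
  have hRprop : ∀ n, MeasurableSet (Rs n) ∧ Rs n ⊆ A := by
    intro n
    induction n with
    | zero => exact ⟨hA, Set.Subset.rfl⟩
    | succ n ih =>
      obtain ⟨hm, hsub⟩ := ih
      have hCg := (hg (Rs n) hm hsub).1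
      refine ⟨hm.diff (hCg.1.union (himg_meas _ _ hCg.1)), ?_⟩
      rw [hRsucc]
      exact Set.diff_subset.trans hsub
  have hGoodn : ∀ n, Good (Rs n) (g (Rs n)) ∧
      ∀ q, Good (Rs n) q → μ q.1 ≤ 2 * μ (C n) :=
    fun n => hg (Rs n) (hRprop n).1 (hRprop n).2
  have hCmeas : ∀ n, MeasurableSet (C n) := fun n => (hGoodn n).1.1
  have hCsubR : ∀ n, C n ⊆ Rs n := fun n => (hGoodn n).1.2.1
  have hCsubA : ∀ n, C n ⊆ A := fun n => (hCsubR n).trans (hRprop n).2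
  have hvne : ∀ n, v n ≠ 0 := fun n => (hGoodn n).1.2.2.1
  have hvt : ∀ n, InTunnel θ ε (toR (v n)) := fun n => (hGoodn n).1.2.2.2.1
  have himA : ∀ n, T (v n) '' C n ⊆ A := fun n => (hGoodn n).1.2.2.2.2
  have hstep : ∀ n, Rs (n + 1) ⊆ Rs n := fun n => by
    rw [hRsucc]; exact Set.diff_subset
  have hmono : ∀ m n, m ≤ n → Rs n ⊆ Rs m := by
    intro m n h
    induction h with
    | refl => exact Set.Subset.rfl
    | step _ ih => exact (hstep _).trans ih
  have hdisj : ∀ m n, m < n → Disjoint (C m) (C n) := by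
    intro m n h
    have h1 : C n ⊆ Rs (m + 1) := (hCsubR n).trans (hmono (m + 1) n h)
    rw [hRsucc] at h1
    exact Set.disjoint_left.2 fun x hxm hxn =>
      (h1 hxn).2 (Set.mem_union_left _ hxm)
  have hdisjP : Pairwise (Function.onFun Disjoint C) := by
    intro m n h
    rcases h.lt_or_gt with h | h
    · exact hdisj m n h
    · exact (hdisj n m h).symm
  have hsum : ∑' n, μ (C n) ≤ μ A := by
    rw [← measure_iUnion hdisjP hCmeas]
    exact measure_mono (Set.iUnion_subset hCsubA)
  -- the full union and its null complement in A
  set U : Set X := ⋃ n, (C n ∪ T (v n) '' C n) with hU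
  have hUA : U ⊆ A := Set.iUnion_subset fun n => Set.union_subset (hCsubA n) (himA n)
  have hUm : MeasurableSet U :=
    MeasurableSet.iUnion fun n => (hCmeas n).union (himg_meas _ _ (hCmeas n))
  have hresid : ∀ n, A \ U ⊆ Rs n := by
    intro n
    induction n with
    | zero => exact Set.diff_subset
    | succ n ih =>
      intro x hx
      rw [hRsucc]
      exact ⟨ih hx, fun hmem => hx.2 (Set.mem_iUnion.2 ⟨n, hmem⟩)⟩
  have hnull : μ (A \ U) = 0 := by
    by_contra h
    have hpos : 0 < μ (A \ U) := pos_iff_ne_zero.2 h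
    have hmeasAU : MeasurableSet (A \ U) := hA.diff hUm
    obtain ⟨w, hwne, hwt, hwpos⟩ := hrec (A \ U) Set.diff_subset hmeasAU hpos
    set B : Set X := (A \ U) ∩ T w ⁻¹' (A \ U) with hB
    have hBm : MeasurableSet B := hmeasAU.inter ((hmp w).measurable hmeasAU)
    have hBgood : ∀ n, Good (Rs n) (B, w) := by
      intro n
      refine ⟨hBm, (Set.inter_subset_left.trans (hresid n)), hwne, hwt, ?_⟩
      have : T w '' B ⊆ T w '' (T w ⁻¹' (A \ U)) :=
        Set.image_mono Set.inter_subset_right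
      exact this.trans ((Set.image_preimage_subset _ _).trans Set.diff_subset)
    have hle : ∀ n, μ B / 2 ≤ μ (C n) := by
      intro n
      have := (hGoodn n).2 (B, w) (hBgood n)
      rw [ENNReal.div_le_iff_le_mul (Or.inl two_ne_zero) (Or.inl ENNReal.ofNat_ne_top)]
      calc μ B ≤ 2 * μ (C n) := this
        _ = μ (C n) * 2 := mul_comm _ _
    have hhalfne : μ B / 2 ≠ 0 := by
      have hBfin : μ B ≠ ⊤ := ((measure_mono (hB ▸ Set.inter_subset_left.trans
        Set.diff_subset)).trans_lt hAfin).ne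
      simp only [ne_eq, ENNReal.div_eq_zero_iff, ENNReal.ofNat_ne_top, or_false]
      exact hwpos.ne'
    have htop : (⊤ : ENNReal) ≤ ∑' n, μ (C n) := by
      rw [← ENNReal.tsum_const_eq_top_of_ne_zero (α := ℕ) hhalfne]
      exact ENNReal.tsum_le_tsum hle
    exact lt_irrefl _ ((htop.trans hsum).trans_lt hAfin)
  -- the final family
  set S : Set ℕ := {n | 0 < μ (C n)} with hS
  set f : ℕ → Set X × (ℤ × ℤ) := fun n => (C n, v n) with hf
  refine ⟨f '' S, (Set.to_countable S).image f, ?_, ?_, ?_, ?_⟩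
  · rintro p ⟨n, hn, rfl⟩
    exact ⟨hCmeas n, hCsubA n, hn, hvne n, hvt n, himA n⟩
  · rintro p ⟨m, -, rfl⟩ q ⟨n, -, rfl⟩ hne
    have hmn : m ≠ n := fun h => hne (by rw [h])
    rcases hmn.lt_or_gt with h | h
    · exact hdisj m n h
    · exact (hdisj n m h).symm
  · -- measure of the covered union equals μ A
    set V : Set X := ⋃ p ∈ f '' S, (p.1 ∪ T p.2 '' p.1) with hV
    have hVA : V ⊆ A := by
      refine Set.iUnion₂_subset ?_
      rintro p ⟨n, -, rfl⟩
      exact Set.union_subset (hCsubA n) (himA n)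
    have hAV : μ (A \ V) = 0 := by
      have hsub : A \ V ⊆ (A \ U) ∪ ⋃ (n : ℕ) (_ : μ (C n) = 0),
          (C n ∪ T (v n) '' C n) := by
        intro x hx
        by_cases hxU : x ∈ U
        · obtain ⟨n, hn⟩ := Set.mem_iUnion.1 hxU
          right
          rcases eq_or_ne (μ (C n)) 0 with h0 | h0
          · exact Set.mem_iUnion.2 ⟨n, Set.mem_iUnion.2 ⟨h0, hn⟩⟩
          · have hfn : f n ∈ f '' S := ⟨n, pos_iff_ne_zero.2 h0, rfl⟩
            exact absurd (Set.mem_biUnion hfn hn) hx.2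
        · exact Or.inl ⟨hx.1, hxU⟩
      refine measure_mono_null hsub (measure_union_null hnull ?_)
      refine measure_iUnion_null fun n => measure_iUnion_null fun h0 => ?_
      have h1 : μ (C n ∪ T (v n) '' C n) ≤ μ (C n) + μ (T (v n) '' C n) :=
        measure_union_le _ _
      rw [himg_measure _ _ (hCmeas n), h0] at h1
      simpa using h1
    refine le_antisymm (measure_mono hVA) ?_
    calc μ A ≤ μ (V ∪ (A \ V)) := measure_mono (fun x hx => by
            by_cases h : x ∈ V
            · exact Or.inl h
            · exact Or.inr ⟨hx, h⟩)
      _ ≤ μ V + μ (A \ V) := measure_union_le _ _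
      _ = μ V := by rw [hAV, add_zero]
  · -- μ A ≤ 2 * tsum
    have hinj : Set.InjOn f S := by
      intro m hm n hn hmn
      by_contra hne
      have hCeq : C m = C n := congrArg Prod.fst hmn
      have hd : Disjoint (C m) (C n) := by
        rcases Ne.lt_or_gt hne with h | h
        · exact hdisj m n h
        · exact (hdisj n m h).symm
      rw [hCeq] at hd
      have hCe : C n = ∅ := by
        rw [← Set.bot_eq_empty]
        exact disjoint_self.1 hd
      have hm' : 0 < μ (C m) := hm
      rw [hCeq, hCe] at hm'
      simp at hm'
    have h1 : μ A ≤ μ U := by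
      calc μ A ≤ μ (U ∪ (A \ U)) := measure_mono (fun x hx => by
              by_cases h : x ∈ U
              · exact Or.inl h
              · exact Or.inr ⟨hx, h⟩)
        _ ≤ μ U + μ (A \ U) := measure_union_le _ _
        _ = μ U := by rw [hnull, add_zero]
    have h2 : μ U ≤ ∑' n, μ (C n ∪ T (v n) '' C n) := measure_iUnion_le _
    have h3 : ∀ n, μ (C n ∪ T (v n) '' C n) ≤ 2 * μ (C n) := fun n => by
      calc μ (C n ∪ T (v n) '' C n) ≤ μ (C n) + μ (T (v n) '' C n) := measure_union_le _ _
        _ = 2 * μ (C n) := by rw [himg_measure _ _ (hCmeas n), two_mul]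
    have h4 : ∑' n, μ (C n ∪ T (v n) '' C n) ≤ 2 * ∑' n, μ (C n) := by
      rw [← ENNReal.tsum_mul_left]
      exact ENNReal.tsum_le_tsum h3
    have h5 : ∑' (n : S), μ (C n) = ∑' (n : ℕ), μ (C n) := by
      refine tsum_subtype_eq_of_support_subset (f := fun n => μ (C n)) ?_
      intro n hn
      exact pos_iff_ne_zero.2 hn
    have h6 : ∑' (p : (f '' S : Set (Set X × (ℤ × ℤ)))), μ (p : Set X × (ℤ × ℤ)).1
        = ∑' (n : S), μ (C n) := tsum_image (fun p => μ p.1) hinj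
    calc μ A ≤ μ U := h1
      _ ≤ ∑' n, μ (C n ∪ T (v n) '' C n) := h2
      _ ≤ 2 * ∑' n, μ (C n) := h4
      _ = 2 * ∑' (p : (f '' S : Set (Set X × (ℤ × ℤ)))), μ (p : Set X × (ℤ × ℤ)).1 := by
          rw [h6, h5]
end
end

section
/- Let μ be a finite measure, A a measurable set with μ(A) > 0, C a measurable set with μ(A △ C) < ε·μ(A) for some 0 < ε < 1/100, and let A₁, …, A_k be pairwise disjoint subsets of A with μ(∪ᵢAᵢ) > (1/4)·μ(A). Define 𝓘 = {i : μ(Aᵢ ∩ C) > (1 − 2√ε)·μ(Aᵢ)}. Then μ(∪_{i∉𝓘} Aᵢ) ≤ 2√ε · μ(∪_{i=1}^k Aᵢ). -/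
open MeasureTheory

noncomputable section

variable {X : Type*} [MeasurableSpace X]

/-- Markov-type lemma: if `C` approximates `A` well and the disjoint pieces `Aᵢ ⊆ A` cover at
least a quarter of `A`, then the pieces not almost covered by `C` have small total measure. -/
theorem badly_covered_pieces_small
    {X : Type*} [MeasurableSpace X] (μ : Measure X) [IsFiniteMeasure μ]
    (A C : Set X) (hA : MeasurableSet A) (hC : MeasurableSet C) (hApos : 0 < μ A)
    (ε : ℝ) (hε : 0 < ε) (hε' : ε < 1/100)
    (hAC : μ (symmDiff A C) < ENNReal.ofReal ε * μ A)
    (k : ℕ) (As : Fin k → Set X) (hmeas : ∀ i, MeasurableSet (As i))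
    (hsub : ∀ i, As i ⊆ A)
    (hdisj : Pairwise fun i j => Disjoint (As i) (As j))
    (hcover : ENNReal.ofReal (1/4) * μ A < μ (⋃ i, As i)) :
    μ (⋃ i ∈ {i : Fin k |
        ¬ ENNReal.ofReal (1 - 2 * Real.sqrt ε) * μ (As i) < μ (As i ∩ C)}, As i)
      ≤ ENNReal.ofReal (2 * Real.sqrt ε) * μ (⋃ i, As i) := by
  classical
  set s := Real.sqrt ε with hsdef
  have hs0 : 0 < s := Real.sqrt_pos.mpr hε
  have hs1 : 2 * s < 1 := by
    have h10 : s < 1/10 := by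
      have h1 : Real.sqrt ε < Real.sqrt (1/100) := Real.sqrt_lt_sqrt hε.le hε'
      have h2 : Real.sqrt (1/100) = 1/10 := by
        rw [show (1/100:ℝ) = (1/10)^2 by norm_num]
        exact Real.sqrt_sq (by norm_num)
      rw [h2] at h1; exact h1
    linarith
  have hseps : s * s = ε := Real.mul_self_sqrt hε.le
  set bad : Finset (Fin k) := Finset.univ.filter
    (fun i => ¬ ENNReal.ofReal (1 - 2 * s) * μ (As i) < μ (As i ∩ C)) with hbad
  set B : Set X := ⋃ i ∈ bad, As i with hB
  have hrw : (⋃ i ∈ {i : Fin k |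
      ¬ ENNReal.ofReal (1 - 2 * s) * μ (As i) < μ (As i ∩ C)}, As i) = B := by
    simp only [hB, hbad, Finset.mem_filter, Finset.mem_univ, true_and]
    rfl
  rw [hrw]
  -- lower bound on μ (As i \ C) for bad i
  have key : ∀ i ∈ bad, ENNReal.ofReal (2 * s) * μ (As i) ≤ μ (As i \ C) := by
    intro i hi
    have hiP := (Finset.mem_filter.mp hi).2
    have hle : μ (As i ∩ C) ≤ ENNReal.ofReal (1 - 2 * s) * μ (As i) := not_lt.mp hiP
    have hsplit : μ (As i ∩ C) + μ (As i \ C) = μ (As i) := measure_inter_add_diff _ hC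
    have hfin : ENNReal.ofReal (1 - 2 * s) * μ (As i) ≠ ⊤ :=
      ENNReal.mul_ne_top ENNReal.ofReal_ne_top (measure_ne_top μ _)
    have hone : ENNReal.ofReal (1 - 2 * s) + ENNReal.ofReal (2 * s) = 1 := by
      rw [← ENNReal.ofReal_add (by linarith) (by positivity)]
      norm_num
    have hchain : ENNReal.ofReal (1 - 2 * s) * μ (As i) + ENNReal.ofReal (2 * s) * μ (As i)
        ≤ ENNReal.ofReal (1 - 2 * s) * μ (As i) + μ (As i \ C) := by
      calc ENNReal.ofReal (1 - 2 * s) * μ (As i) + ENNReal.ofReal (2 * s) * μ (As i)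
          = μ (As i) := by rw [← add_mul, hone, one_mul]
        _ = μ (As i ∩ C) + μ (As i \ C) := hsplit.symm
        _ ≤ ENNReal.ofReal (1 - 2 * s) * μ (As i) + μ (As i \ C) :=
            add_le_add_left hle _
    exact (ENNReal.add_le_add_iff_left hfin).mp hchain
  have hsumB : μ B = ∑ i ∈ bad, μ (As i) := by
    refine measure_biUnion_finset ?_ (fun i _ => hmeas i)
    intro i _ j _ hij
    exact hdisj hij
  have hBClow : ENNReal.ofReal (2 * s) * μ B ≤ μ (B \ C) := by
    have hBdiff : B \ C = ⋃ i ∈ bad, (As i \ C) := by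
      simp only [hB, Set.iUnion_diff]
    have hsum2 : μ (B \ C) = ∑ i ∈ bad, μ (As i \ C) := by
      rw [hBdiff]
      refine measure_biUnion_finset ?_ (fun i _ => (hmeas i).diff hC)
      intro i _ j _ hij
      exact (hdisj hij).mono Set.diff_subset Set.diff_subset
    rw [hsum2, hsumB, Finset.mul_sum]
    exact Finset.sum_le_sum key
  have hBsubA : B ⊆ A := by
    intro x hx
    simp only [hB, Set.mem_iUnion] at hx
    obtain ⟨i, _, hxi⟩ := hx
    exact hsub i hxi
  have hBCsymm : μ (B \ C) ≤ μ (symmDiff A C) := by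
    apply measure_mono
    intro x hx
    exact Or.inl ⟨hBsubA hx.1, hx.2⟩
  have hmain : ENNReal.ofReal (2 * s) * μ B < ENNReal.ofReal ε * μ A :=
    lt_of_le_of_lt (hBClow.trans hBCsymm) hAC
  have hA4 : μ A ≤ 4 * μ (⋃ i, As i) := by
    have h4 : (4 : ENNReal) * (ENNReal.ofReal (1/4) * μ A) = μ A := by
      rw [← mul_assoc, (show (4:ENNReal) = ENNReal.ofReal 4 by simp),
        ← ENNReal.ofReal_mul (by norm_num)]
      norm_num
    calc μ A = 4 * (ENNReal.ofReal (1/4) * μ A) := h4.symm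
      _ ≤ 4 * μ (⋃ i, As i) := mul_le_mul_right hcover.le _
  have hfinal : ENNReal.ofReal (2 * s) * μ B
      ≤ ENNReal.ofReal (2 * s) * (ENNReal.ofReal (2 * s) * μ (⋃ i, As i)) := by
    calc ENNReal.ofReal (2 * s) * μ B ≤ ENNReal.ofReal ε * μ A := hmain.le
      _ ≤ ENNReal.ofReal ε * (4 * μ (⋃ i, As i)) := mul_le_mul_right hA4 _
      _ = ENNReal.ofReal (2 * s) * (ENNReal.ofReal (2 * s) * μ (⋃ i, As i)) := by
          rw [← mul_assoc, ← mul_assoc, ← ENNReal.ofReal_mul (by positivity),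
            (show (4:ENNReal) = ENNReal.ofReal 4 by simp),
            ← ENNReal.ofReal_mul (by positivity)]
          rw [(show ε = s ^ 2 by rw [sq]; exact hseps.symm)]
          ring_nf
  have h2s0 : ENNReal.ofReal (2 * s) ≠ 0 := by
    simp [ENNReal.ofReal_eq_zero, not_le]
    linarith
  exact (ENNReal.mul_le_mul_iff_right h2s0 ENNReal.ofReal_ne_top).mp hfinal
end
end

section
/- Let T be a measure preserving Z²-action, A a set of finite positive measure, ε > 0, θ a direction, and suppose pairwise disjoint positive-measure sets A₁,…,A_k ⊆ A and vectors v₁,…,v_k in the ε-tunnel of θ witness the ε sweeping out property with parameter α ∈ (1/4, 1/2). Let C be measurable with μ(A △ C) < ε·μ(A) and ε sufficiently small (ε < 1/10000 suffices). Then there exists an index i with μ(Aᵢ ∩ C) > (1/2)·μ(Aᵢ) and μ(T^{vᵢ}Aᵢ ∩ C) > (1/2)·μ(T^{vᵢ}Aᵢ); in particular μ(C ∩ T^{vᵢ}C) > 0 for some vᵢ in the ε-tunnel of θ. -/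
open MeasureTheory

noncomputable section

variable {X : Type*} [MeasurableSpace X]

/-- If disjoint pieces of `A` and their translates witness the `ε` sweeping out property with
parameter `α ∈ (1/4, 1/2)`, and `C` approximates `A` within `ε·μ(A)` for small `ε`, then some
piece and its translate are both more than half covered by `C`; in particular `C` meets
`T^{vᵢ}C` for some tunnel vector `vᵢ`. -/
theorem sweeping_out_transfers_to_approximating_set
    {X : Type*} [MeasurableSpace X] (μ : Measure X)
    (T : ℤ × ℤ → X → X)
    (hmp : ∀ n, MeasurePreserving (T n) μ μ)
    (hadd : ∀ m n x, T (m + n) x = T m (T n x)) (hzero : ∀ x, T 0 x = x)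
    (A : Set X) (hA : MeasurableSet A) (hApos : 0 < μ A) (hAfin : μ A < ⊤)
    (ε : ℝ) (hε : 0 < ε) (hεsmall : ε < 1/10000)
    (θ α : ℝ) (hα1 : 1/4 < α) (hα2 : α < 1/2)
    (k : ℕ) (As : Fin k → Set X) (v : Fin k → ℤ × ℤ)
    (hmeas : ∀ i, MeasurableSet (As i))
    (himmeas : ∀ i, MeasurableSet (T (v i) '' As i))
    (hsub : ∀ i, As i ⊆ A) (hpos : ∀ i, 0 < μ (As i))
    (hdisj : Pairwise fun i j => Disjoint (As i) (As j))
    (htun : ∀ i, InTunnel θ ε (toR (v i)))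
    (himsub : ∀ i, T (v i) '' As i ⊆ A)
    (himdisj : Pairwise fun i j => Disjoint (T (v i) '' As i) (T (v j) '' As j))
    (hcov : ENNReal.ofReal α * μ A < μ (⋃ i, As i))
    (himcov : ENNReal.ofReal α * μ A < μ (⋃ i, T (v i) '' As i))
    (C : Set X) (hC : MeasurableSet C)
    (hAC : μ (symmDiff A C) < ENNReal.ofReal ε * μ A) :
    ∃ i : Fin k,
      μ (As i) / 2 < μ (As i ∩ C) ∧
      μ (T (v i) '' As i) / 2 < μ (T (v i) '' As i ∩ C) ∧
      0 < μ (C ∩ T (v i) '' C) := by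
  -- images are preimages under the inverse
  have key : ∀ (n : ℤ × ℤ) (S : Set X), T n '' S = T (-n) ⁻¹' S := by
    intro n S
    ext x
    constructor
    · rintro ⟨y, hy, rfl⟩
      have : T (-n) (T n y) = y := by rw [← hadd]; simp [hzero]
      simpa [Set.mem_preimage, this] using hy
    · intro hx
      exact ⟨T (-n) x, hx, by rw [← hadd]; simp [hzero]⟩
  have himg_meas : ∀ (n : ℤ × ℤ) (S : Set X), MeasurableSet S →
      MeasurableSet (T n '' S) := by
    intro n S hS
    rw [key]
    exact (hmp (-n)).measurable hS
  have himg_eq : ∀ (n : ℤ × ℤ) (S : Set X), MeasurableSet S →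
      μ (T n '' S) = μ S := by
    intro n S hS
    rw [key]
    exact (hmp (-n)).measure_preimage hS.nullMeasurableSet
  set D := symmDiff A C with hDdef
  have hD : MeasurableSet D := hA.symmDiff hC
  -- the half-covering lemma
  have sub : ∀ S : Set X, MeasurableSet S → S ⊆ A → μ (S ∩ C) ≤ μ S / 2 →
      μ S ≤ 2 * μ (D ∩ S) := by
    intro S hS hSA hle
    have hfin : μ S ≠ ⊤ := ((measure_mono hSA).trans_lt hAfin).ne
    have hsplit : μ (S ∩ C) + μ (S \ C) = μ S := measure_inter_add_diff S hC
    have h1 : μ S ≤ μ S / 2 + μ (S \ C) := by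
      calc μ S = μ (S ∩ C) + μ (S \ C) := hsplit.symm
        _ ≤ μ S / 2 + μ (S \ C) := add_le_add_left hle _
    have h2 : μ S / 2 ≤ μ (S \ C) := by
      have := tsub_le_iff_left.mpr h1
      rwa [ENNReal.sub_half hfin] at this
    have h3 : S \ C ⊆ D ∩ S := by
      intro x hx
      exact ⟨Or.inl ⟨hSA hx.1, hx.2⟩, hx.1⟩
    calc μ S = μ S / 2 + μ S / 2 := (ENNReal.add_halves _).symm
      _ ≤ μ (S \ C) + μ (S \ C) := add_le_add h2 h2
      _ ≤ μ (D ∩ S) + μ (D ∩ S) := add_le_add (measure_mono h3) (measure_mono h3)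
      _ = 2 * μ (D ∩ S) := (two_mul _).symm
  have hμA0 : μ A ≠ 0 := hApos.ne'
  have hμAtop : μ A ≠ ⊤ := hAfin.ne
  -- main existence
  have hmain : ∃ i, μ (As i) / 2 < μ (As i ∩ C) ∧
      μ (T (v i) '' As i) / 2 < μ (T (v i) '' As i ∩ C) := by
    by_contra hcon
    push_neg at hcon
    have hbound : ∀ i, μ (As i) ≤
        2 * μ (D ∩ As i) + 2 * μ (D ∩ T (v i) '' As i) := by
      intro i
      by_cases h1 : μ (As i) / 2 < μ (As i ∩ C)
      · have h2 := hcon i h1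
        have := sub (T (v i) '' As i) (himmeas i) (himsub i) h2
        calc μ (As i) = μ (T (v i) '' As i) := (himg_eq _ _ (hmeas i)).symm
          _ ≤ 2 * μ (D ∩ T (v i) '' As i) := this
          _ ≤ _ := le_add_self
      · push_neg at h1
        have := sub (As i) (hmeas i) (hsub i) h1
        calc μ (As i) ≤ 2 * μ (D ∩ As i) := this
          _ ≤ _ := le_add_right le_rfl
    have hdisj1 : Pairwise fun i j => Disjoint (D ∩ As i) (D ∩ As j) :=
      fun i j hij => ((hdisj hij).mono Set.inter_subset_right Set.inter_subset_right)
    have hdisj2 : Pairwise fun i j =>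
        Disjoint (D ∩ T (v i) '' As i) (D ∩ T (v j) '' As j) :=
      fun i j hij => ((himdisj hij).mono Set.inter_subset_right Set.inter_subset_right)
    have hs1 : ∑' i, μ (D ∩ As i) ≤ μ D := by
      rw [← measure_iUnion hdisj1 (fun i => hD.inter (hmeas i))]
      exact measure_mono (Set.iUnion_subset fun i => Set.inter_subset_left)
    have hs2 : ∑' i, μ (D ∩ T (v i) '' As i) ≤ μ D := by
      rw [← measure_iUnion hdisj2 (fun i => hD.inter (himmeas i))]
      exact measure_mono (Set.iUnion_subset fun i => Set.inter_subset_left)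
    have hchain : ENNReal.ofReal α * μ A < 4 * μ D := by
      calc ENNReal.ofReal α * μ A < μ (⋃ i, As i) := hcov
        _ = ∑' i, μ (As i) := measure_iUnion hdisj hmeas
        _ ≤ ∑' i, (2 * μ (D ∩ As i) + 2 * μ (D ∩ T (v i) '' As i)) :=
            ENNReal.tsum_le_tsum hbound
        _ = 2 * (∑' i, μ (D ∩ As i)) + 2 * (∑' i, μ (D ∩ T (v i) '' As i)) := by
            rw [ENNReal.tsum_add, ENNReal.tsum_mul_left, ENNReal.tsum_mul_left]
        _ ≤ 2 * μ D + 2 * μ D := by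
            gcongr
        _ = 4 * μ D := by ring
    have hfinal : ENNReal.ofReal α * μ A < ENNReal.ofReal (4 * ε) * μ A := by
      calc ENNReal.ofReal α * μ A < 4 * μ D := hchain
        _ < 4 * (ENNReal.ofReal ε * μ A) := by
            rw [ENNReal.mul_lt_mul_iff_right (by norm_num) (by norm_num)]
            exact hAC
        _ = ENNReal.ofReal (4 * ε) * μ A := by
            rw [ENNReal.ofReal_mul (by norm_num)]
            norm_num
            ring
    have hlt : ENNReal.ofReal α < ENNReal.ofReal (4 * ε) :=
      (ENNReal.mul_lt_mul_iff_left hμA0 hμAtop).mp hfinal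
    have : α < 4 * ε := by
      have h4ε : (0:ℝ) < 4 * ε := by linarith
      exact (ENNReal.ofReal_lt_ofReal_iff h4ε).mp hlt
    linarith
  obtain ⟨i, h1, h2⟩ := hmain
  refine ⟨i, h1, h2, ?_⟩
  by_contra h0
  have h0' : μ (C ∩ T (v i) '' C) = 0 := by
    simpa [pos_iff_ne_zero] using h0
  set S₁ : Set X := T (v i) '' (As i ∩ C) with hS₁
  set S₂ : Set X := T (v i) '' As i ∩ C with hS₂
  have hmS₂ : MeasurableSet S₂ := (himmeas i).inter hC
  have hμS₁ : μ S₁ = μ (As i ∩ C) := himg_eq _ _ ((hmeas i).inter hC)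
  have hAifin : μ (As i) ≠ ⊤ := ((measure_mono (hsub i)).trans_lt hAfin).ne
  have hμTA : μ (T (v i) '' As i) = μ (As i) := himg_eq _ _ (hmeas i)
  have hsub12 : S₁ ∩ S₂ ⊆ C ∩ T (v i) '' C := by
    rintro x ⟨hx1, hx2, hx3⟩
    exact ⟨hx3, Set.image_mono Set.inter_subset_right hx1⟩
  have hz : μ (S₁ ∩ S₂) = 0 :=
    le_antisymm (h0' ▸ measure_mono hsub12) zero_le
  have hunion : S₁ ∪ S₂ ⊆ T (v i) '' As i := by
    apply Set.union_subset
    · exact Set.image_mono Set.inter_subset_left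
    · exact Set.inter_subset_left
  have hineq : μ (As i) < μ (As i) := by
    calc μ (As i) = μ (As i) / 2 + μ (As i) / 2 := (ENNReal.add_halves _).symm
      _ < μ S₁ + μ S₂ := by
          apply ENNReal.add_lt_add
          · rw [hμS₁]; exact h1
          · rw [hS₂]; rw [← hμTA]; exact hμTA ▸ h2
      _ = μ (S₁ ∪ S₂) + μ (S₁ ∩ S₂) := (measure_union_add_inter _ hmS₂).symm
      _ = μ (S₁ ∪ S₂) := by rw [hz, add_zero]
      _ ≤ μ (T (v i) '' As i) := measure_mono hunion
      _ = μ (As i) := hμTA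
  exact absurd hineq (lt_irrefl _)
end
end
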